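/- arXiv:2411.19138 — 4 statements merged into one kernel-verified Lean document; each statement's English description precedes it below -/
import Mathlib

section
/- The second moment of the Fejér kernel satisfies \(\beta(K_m) := \int_{-\pi}^{\pi} y^2 K_m(y)\,dy = \frac{4\log 2}{m+1} + O(m^{-2})\) as \(m\to\infty\). -/
open Finset

open Real

lemma integral_sq_cos (k : ℕ) (hk : 1 ≤ k) :
    ∫ y in (-Real.pi)..Real.pi, y ^ 2 * Real.cos (k * y)
      = 4 * Real.pi * (-1) ^ k / (k : ℝ) ^ 2 := by
  have hk0 : (k:ℝ) ≠ 0 := by exact_mod_cast Nat.one_le_iff_ne_zero.mp hk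
  set K := (k:ℝ) with hK
  have hF : ∀ y : ℝ, HasDerivAt
      (fun y => (y^2/K - 2/K^3) * Real.sin (K*y) + (2*y/K^2) * Real.cos (K*y))
      (y^2 * Real.cos (K*y)) y := by
    intro y
    have hy : HasDerivAt (fun y : ℝ => K * y) K y := by
      simpa using (hasDerivAt_id y).const_mul K
    have hs : HasDerivAt (fun y => Real.sin (K*y)) (Real.cos (K*y) * K) y :=
      (Real.hasDerivAt_sin (K*y)).comp y hy
    have hc : HasDerivAt (fun y => Real.cos (K*y)) (-Real.sin (K*y) * K) y :=
      (Real.hasDerivAt_cos (K*y)).comp y hy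
    have h1 : HasDerivAt (fun y : ℝ => y^2/K - 2/K^3) (2*y/K) y := by
      have := ((hasDerivAt_pow 2 y).div_const K).sub_const (2/K^3)
      simpa [pow_one] using this
    have h3 : HasDerivAt (fun y : ℝ => 2*y/K^2) (2/K^2) y := by
      have := ((hasDerivAt_id y).const_mul 2).div_const (K^2)
      simpa using this
    have := (h1.mul hs).add (h3.mul hc)
    refine this.congr_deriv ?_
    field_simp
    ring
  rw [intervalIntegral.integral_eq_sub_of_hasDerivAt (fun y _ => hF y)
      (((continuous_pow 2).mul (Real.continuous_cos.comp (continuous_const.mul continuous_id))).intervalIntegrable _ _)]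
  have hsin : Real.sin (K * Real.pi) = 0 := Real.sin_nat_mul_pi k
  have hsin' : Real.sin (K * -Real.pi) = 0 := by
    rw [mul_neg, Real.sin_neg, hsin, neg_zero]
  have hcos : Real.cos (K * Real.pi) = (-1)^k := by
    simpa using Real.cos_nat_mul_pi_sub 0 k
  have hcos' : Real.cos (K * -Real.pi) = (-1)^k := by
    rw [mul_neg, Real.cos_neg, hcos]
  rw [hsin, hsin', hcos, hcos']
  field_simp
  ring

lemma integral_inv_one_add : ∫ x in (0:ℝ)..1, (1+x)⁻¹ = Real.log 2 := by
  have := intervalIntegral.integral_comp_add_left (a := (0:ℝ)) (b := 1) (fun x => x⁻¹) 1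
  rw [this]
  rw [integral_inv (by norm_num : (0:ℝ) ∉ Set.uIcc (1+0) (1+1))]
  norm_num

lemma alt_harmonic_bound (m : ℕ) :
    |(∑ k ∈ Finset.Icc 1 m, (-1:ℝ)^(k+1)/k) - Real.log 2| ≤ 1/(m+1) := by
  have hcont : ContinuousOn (fun x : ℝ => (-x)^m * (1+x)⁻¹) (Set.uIcc 0 1) := by
    apply ContinuousOn.mul ((continuous_neg.pow m).continuousOn)
    apply ContinuousOn.inv₀ (by fun_prop)
    intro x hx
    rw [Set.uIcc_of_le (by norm_num)] at hx
    nlinarith [hx.1]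
  -- sum = ∫ geometric
  have hsum : (∑ k ∈ Finset.Icc 1 m, (-1:ℝ)^(k+1)/k)
      = ∫ x in (0:ℝ)..1, ∑ j ∈ Finset.range m, (-x)^j := by
    rw [intervalIntegral.integral_finset_sum (f := fun j (x : ℝ) => (-x)^j)
      (fun j _ => ((continuous_neg.pow j).intervalIntegrable _ _))]
    rw [← Finset.Ico_add_one_right_eq_Icc, Finset.sum_Ico_eq_sum_range, Nat.add_sub_cancel]
    apply Finset.sum_congr rfl
    intro j _
    have hint : (∫ x in (0:ℝ)..1, (-x)^j) = (-1)^j / (j+1) := by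
      have hfun : (fun x:ℝ => (-x)^j) = (fun x:ℝ => (-1)^j * x^j) := by
        funext x; rw [neg_pow]
      rw [hfun, intervalIntegral.integral_const_mul, integral_pow]
      norm_num
      rw [div_eq_mul_inv]
    rw [hint]
    push_cast
    ring
  have hgeom : ∀ x : ℝ, x ∈ Set.Icc (0:ℝ) 1 →
      (∑ j ∈ Finset.range m, (-x)^j) - (1+x)⁻¹ = -((-x)^m * (1+x)⁻¹) := by
    intro x hx
    have hne : (1:ℝ) + x ≠ 0 := by nlinarith [hx.1]
    have hx1 : (-x : ℝ) ≠ 1 := by intro h; nlinarith [hx.1]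
    have hne' : (-x) - 1 ≠ 0 := by intro h; nlinarith [hx.1]
    rw [geom_sum_eq hx1]
    field_simp
    ring
  have key : (∑ k ∈ Finset.Icc 1 m, (-1:ℝ)^(k+1)/k) - Real.log 2
      = -∫ x in (0:ℝ)..1, (-x)^m * (1+x)⁻¹ := by
    rw [hsum, ← integral_inv_one_add, ← intervalIntegral.integral_sub
      ((continuous_finset_sum (f := fun j (x : ℝ) => (-x)^j) _ (fun j _ => continuous_neg.pow j)).intervalIntegrable 0 1)
      (ContinuousOn.intervalIntegrable (by
        apply ContinuousOn.inv₀ (by fun_prop)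
        intro x hx
        rw [Set.uIcc_of_le (by norm_num)] at hx
        nlinarith [hx.1]))]
    · rw [← intervalIntegral.integral_neg]
      apply intervalIntegral.integral_congr
      intro x hx
      rw [Set.uIcc_of_le (by norm_num)] at hx
      exact hgeom x hx
  rw [key, abs_neg]
  calc |∫ x in (0:ℝ)..1, (-x)^m * (1+x)⁻¹|
      ≤ ∫ x in (0:ℝ)..1, |(-x)^m * (1+x)⁻¹| :=
        intervalIntegral.abs_integral_le_integral_abs (by norm_num)
    _ ≤ ∫ x in (0:ℝ)..1, x^m := by
        apply intervalIntegral.integral_mono_on (by norm_num)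
          (hcont.abs.intervalIntegrable)
          ((continuous_pow m).intervalIntegrable _ _)
        intro x hx
        have h0 : (0:ℝ) ≤ x := hx.1
        have h1 : (1:ℝ) + x ≠ 0 := by nlinarith
        rw [abs_mul, abs_pow, abs_neg, abs_of_nonneg h0, abs_inv,
          abs_of_nonneg (by nlinarith : (0:ℝ) ≤ 1 + x)]
        calc x^m * (1+x)⁻¹ ≤ x^m * 1 := by
              apply mul_le_mul_of_nonneg_left _ (by positivity)
              rw [inv_le_one_iff₀]
              right; nlinarith
          _ = x^m := mul_one _
    _ = 1/(m+1) := by rw [integral_pow]; norm_num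

lemma bernoulli_two_eval_half :
    (Polynomial.bernoulli 2).eval (1/2 : ℚ) = -1/12 := by
  simp_rw [Polynomial.bernoulli, Finset.sum_range_succ, Polynomial.eval_add,
    Polynomial.eval_monomial]
  rw [Finset.sum_range_zero, Polynomial.eval_zero, zero_add, bernoulli_one,
    bernoulli_eq_bernoulli'_of_ne_one zero_ne_one, bernoulli'_zero,
    bernoulli_eq_bernoulli'_of_ne_one (by decide : 2 ≠ 1), bernoulli'_two]
  norm_num

lemma hasSum_alt_two : HasSum (fun n : ℕ => (-1:ℝ)^n / (n:ℝ)^2) (-(Real.pi^2/12)) := by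
  have h := hasSum_one_div_nat_pow_mul_cos (k := 1) one_ne_zero
      (x := (1/2 : ℝ)) (by rw [Set.mem_Icc]; norm_num)
  have hfun : (fun n : ℕ => 1/(n:ℝ)^(2*1) * Real.cos (2*π*n*(1/2)))
      = fun n : ℕ => (-1:ℝ)^n / (n:ℝ)^2 := by
    funext n
    rw [show 2*Real.pi*n*(1/2) = n*Real.pi by ring,
      show Real.cos (n*Real.pi) = (-1:ℝ)^n by simpa using Real.cos_nat_mul_pi_sub 0 n]
    ring
  have hval : ((-1:ℝ)^(1+1) * (2*π)^(2*1) / 2 / (Nat.factorial (2*1)) *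
      (Polynomial.map (algebraMap ℚ ℝ) (Polynomial.bernoulli (2*1))).eval (1/2 : ℝ))
      = -(Real.pi^2/12) := by
    have h2 : (1/2 : ℝ) = (algebraMap ℚ ℝ) (1/2 : ℚ) := by norm_num
    rw [h2, Polynomial.eval_map, Polynomial.eval₂_at_apply,
      (by norm_num : 2*1 = 2), bernoulli_two_eval_half]
    norm_num [Nat.factorial]
    ring
  rw [hfun, hval] at h
  exact h

lemma alt_tail {b : ℕ → ℝ} (hb : ∀ n, 0 ≤ b n) (hmono : ∀ n, b (n+1) ≤ b n)
    (hsum : Summable b) {t : ℝ} (ht : HasSum (fun n => (-1:ℝ)^n * b n) t) :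
    0 ≤ t ∧ t ≤ b 0 := by
  have h2inj : Function.Injective (fun i : ℕ => 2*i) := fun a b h => by dsimp at h; omega
  have h2inj' : Function.Injective (fun i : ℕ => 2*i+1) := fun a b h => by dsimp at h; omega
  have h2inj'' : Function.Injective (fun i : ℕ => 2*i+2) := fun a b h => by dsimp at h; omega
  have se : Summable (fun i => b (2*i)) := hsum.comp_injective h2inj
  have so : Summable (fun i => b (2*i+1)) := hsum.comp_injective h2inj'
  have se2 : Summable (fun i => b (2*i+2)) := hsum.comp_injective h2inj''
  have hE : HasSum (fun i => (-1:ℝ)^(2*i) * b (2*i)) (∑' i, b (2*i)) := by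
    have : (fun i => (-1:ℝ)^(2*i) * b (2*i)) = fun i => b (2*i) := by
      funext i; rw [pow_mul]; norm_num
    rw [this]; exact se.hasSum
  have hO : HasSum (fun i => (-1:ℝ)^(2*i+1) * b (2*i+1)) (-∑' i, b (2*i+1)) := by
    have : (fun i => (-1:ℝ)^(2*i+1) * b (2*i+1)) = fun i => -(b (2*i+1)) := by
      funext i; rw [pow_succ, pow_mul]; norm_num
    rw [this]; exact so.hasSum.neg
  have hEO : HasSum (fun n => (-1:ℝ)^n * b n) ((∑' i, b (2*i)) + -∑' i, b (2*i+1)) :=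
    HasSum.even_add_odd (f := fun n => (-1:ℝ)^n * b n) hE hO
  have ht' : t = (∑' i, b (2*i)) + -∑' i, b (2*i+1) := ht.unique hEO
  constructor
  · rw [ht']
    have : (∑' i, b (2*i+1)) ≤ ∑' i, b (2*i) :=
      Summable.tsum_le_tsum (fun i => by simpa [mul_add] using hmono (2*i)) so se
    linarith
  · rw [ht']
    have hsplit : (∑' i, b (2*i)) = b 0 + ∑' i, b (2*(i+1)) := by
      simpa using Summable.tsum_eq_zero_add se
    have : (∑' i, b (2*(i+1))) ≤ ∑' i, b (2*i+1) := by
      apply Summable.tsum_le_tsum (fun i => ?_) (by simpa [mul_add] using se2) so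
      have := hmono (2*i+1)
      have h22 : 2*(i+1) = 2*i+1+1 := by ring
      rw [h22]
      exact this
    linarith [hsplit]

lemma alt_two_partial (m : ℕ) :
    |(∑ k ∈ Finset.Icc 1 m, (-1:ℝ)^k/(k:ℝ)^2) + Real.pi^2/12| ≤ 1/((m:ℝ)+1)^2 := by
  set f : ℕ → ℝ := fun n => (-1:ℝ)^n / (n:ℝ)^2 with hf
  have hS : ∑ i ∈ Finset.range (m+1), f i = ∑ k ∈ Finset.Icc 1 m, (-1:ℝ)^k/(k:ℝ)^2 := by
    rw [Finset.sum_range_succ' (f := f)]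
    rw [← Finset.Ico_add_one_right_eq_Icc, Finset.sum_Ico_eq_sum_range, Nat.add_sub_cancel]
    simp only [hf]
    norm_num
    apply Finset.sum_congr rfl
    intro i _
    ring_nf
  set T : ℝ := -(Real.pi^2/12) - ∑ i ∈ Finset.range (m+1), f i with hT
  have htail : HasSum (fun n => f (n + (m+1))) T := by
    rw [hasSum_nat_add_iff (m+1)]
    have : T + ∑ i ∈ Finset.range (m+1), f i = -(Real.pi^2/12) := by rw [hT]; ring
    rw [this]
    exact hasSum_alt_two
  set b : ℕ → ℝ := fun n => 1/((n:ℝ)+(m:ℝ)+1)^2 with hbdef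
  have hb : ∀ n, 0 ≤ b n := fun n => by positivity
  have hmono : ∀ n, b (n+1) ≤ b n := by
    intro n
    apply one_div_le_one_div_of_le (by positivity)
    push_cast
    have hn : (0:ℝ) ≤ n := Nat.cast_nonneg n
    have hm : (0:ℝ) ≤ m := Nat.cast_nonneg m
    nlinarith
  have hbsum : Summable b := by
    have : Summable (fun n : ℕ => 1/(n:ℝ)^2) := by
      rw [Real.summable_one_div_nat_pow]
      norm_num
    have h := this.comp_injective (fun a c h => by dsimp at h; omega : Function.Injective (fun i : ℕ => i+m+1))
    apply h.congr
    intro n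
    simp only [Function.comp, hbdef]
    push_cast
    ring_nf
  have hflip : HasSum (fun n => (-1:ℝ)^n * b n) ((-1:ℝ)^(m+1) * T) := by
    have h := htail.mul_left ((-1:ℝ)^(m+1))
    have heq : (fun n => (-1:ℝ)^(m+1) * f (n+(m+1))) = fun n => (-1:ℝ)^n * b n := by
      funext n
      simp only [hf, hbdef]
      have hsq : ((-1:ℝ)^(m+1))*((-1:ℝ)^(m+1)) = 1 := by
        rw [← pow_add, show m+1+(m+1) = 2*(m+1) by ring, pow_mul]
        norm_num
      rw [pow_add]
      push_cast
      linear_combination ((-1:ℝ)^n / ((n:ℝ)+(m:ℝ)+1)^2) * hsq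
    rw [← heq]
    exact h
  have hres := alt_tail hb hmono hbsum hflip
  have hb0 : b 0 = 1/((m:ℝ)+1)^2 := by simp only [hbdef]; norm_num
  have habs : |T| ≤ 1/((m:ℝ)+1)^2 := by
    have h1 : |(-1:ℝ)^(m+1) * T| ≤ 1/((m:ℝ)+1)^2 := by
      rw [abs_of_nonneg hres.1]
      rw [← hb0]; exact hres.2
    rwa [abs_mul, abs_pow, abs_neg, abs_one, one_pow, one_mul] at h1
  rw [← hS]
  have hgoal : (∑ i ∈ Finset.range (m+1), f i) + Real.pi^2/12 = -T := by rw [hT]; ring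
  rw [hgoal, abs_neg]
  exact habs

open Finset

noncomputable def fejerKernel (m : ℕ) (s : ℝ) : ℝ :=
  1 / (2 * Real.pi) +
    (1 / Real.pi) * ∑ k ∈ Finset.Icc 1 m, (1 - (k : ℝ) / (m + 1)) * Real.cos (k * s)

lemma fejer_integral (m : ℕ) :
    (∫ y in (-Real.pi)..Real.pi, y ^ 2 * fejerKernel m y)
      = Real.pi^2/3 + 4 * ∑ k ∈ Finset.Icc 1 m, (1 - (k:ℝ)/((m:ℝ)+1)) * ((-1:ℝ)^k/(k:ℝ)^2) := by
  have hpi : Real.pi ≠ 0 := Real.pi_ne_zero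
  have h1 : (fun y : ℝ => y ^ 2 * fejerKernel m y)
      = fun y : ℝ => y^2 * (1/(2*Real.pi)) + ∑ k ∈ Finset.Icc 1 m,
          ((1/Real.pi) * (1 - (k:ℝ)/((m:ℝ)+1))) * (y^2 * Real.cos (k*y)) := by
    funext y
    rw [fejerKernel, mul_add, Finset.mul_sum, Finset.mul_sum]
    congr 1
    apply Finset.sum_congr rfl
    intro k _
    push_cast
    ring
  rw [h1]
  have hint1 : IntervalIntegrable (fun y : ℝ => y^2 * (1/(2*Real.pi)))
      MeasureTheory.volume (-Real.pi) Real.pi :=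
    (((continuous_pow 2).mul continuous_const)).intervalIntegrable _ _
  have hintk : ∀ k : ℕ, IntervalIntegrable
      (fun y : ℝ => ((1/Real.pi) * (1 - (k:ℝ)/((m:ℝ)+1))) * (y^2 * Real.cos (k*y)))
      MeasureTheory.volume (-Real.pi) Real.pi := by
    intro k
    exact (continuous_const.mul ((continuous_pow 2).mul
      (Real.continuous_cos.comp (continuous_const.mul continuous_id)))).intervalIntegrable _ _
  have hint2 : IntervalIntegrable (fun y : ℝ => ∑ k ∈ Finset.Icc 1 m,
      ((1/Real.pi) * (1 - (k:ℝ)/((m:ℝ)+1))) * (y^2 * Real.cos (k*y)))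
      MeasureTheory.volume (-Real.pi) Real.pi := by
    apply Continuous.intervalIntegrable
    apply continuous_finset_sum
    intro k _
    exact continuous_const.mul ((continuous_pow 2).mul
      (Real.continuous_cos.comp (continuous_const.mul continuous_id)))
  rw [intervalIntegral.integral_add hint1 hint2]
  rw [intervalIntegral.integral_finset_sum (fun k _ => hintk k)]
  congr 1
  · rw [intervalIntegral.integral_mul_const, integral_pow]
    field_simp
    ring
  · rw [Finset.mul_sum]
    apply Finset.sum_congr rfl
    intro k hk
    have hk0 : (k:ℝ) ≠ 0 := by
      exact_mod_cast Nat.one_le_iff_ne_zero.mp (Finset.mem_Icc.mp hk).1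
    have hm1 : ((m:ℝ)+1) ≠ 0 := by positivity
    rw [intervalIntegral.integral_const_mul, integral_sq_cos k (Finset.mem_Icc.mp hk).1]
    field_simp

theorem fejerKernel_second_moment :
    ∃ C : ℝ, 0 < C ∧ ∀ m : ℕ, 1 ≤ m →
      |(∫ y in (-Real.pi)..Real.pi, y ^ 2 * fejerKernel m y)
          - 4 * Real.log 2 / (m + 1)| ≤ C / (m : ℝ) ^ 2 := by
  refine ⟨8, by norm_num, fun m hm => ?_⟩
  have hm1 : (0:ℝ) < (m:ℝ) + 1 := by positivity
  have hm0 : (0:ℝ) < (m:ℝ) := by exact_mod_cast hm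
  set S2 : ℝ := ∑ k ∈ Finset.Icc 1 m, (-1:ℝ)^k/(k:ℝ)^2 with hS2
  set S1 : ℝ := ∑ k ∈ Finset.Icc 1 m, (-1:ℝ)^(k+1)/(k:ℝ) with hS1
  have hsplit : (∑ k ∈ Finset.Icc 1 m, (1 - (k:ℝ)/((m:ℝ)+1)) * ((-1:ℝ)^k/(k:ℝ)^2))
      = S2 + (1/((m:ℝ)+1)) * S1 := by
    have hterm : ∀ k ∈ Finset.Icc 1 m, (1 - (k:ℝ)/((m:ℝ)+1)) * ((-1:ℝ)^k/(k:ℝ)^2)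
        = (-1:ℝ)^k/(k:ℝ)^2 + (1/((m:ℝ)+1)) * ((-1:ℝ)^(k+1)/(k:ℝ)) := by
      intro k hk
      have hk1 : 1 ≤ k := (Finset.mem_Icc.mp hk).1
      have hk0 : (k:ℝ) ≠ 0 := by
        exact_mod_cast Nat.one_le_iff_ne_zero.mp hk1
      rw [pow_succ]
      field_simp
      ring
    rw [Finset.sum_congr rfl hterm, Finset.sum_add_distrib, ← Finset.mul_sum]
  have hE1 := alt_two_partial m
  have hE2 := alt_harmonic_bound m
  rw [← hS2] at hE1
  rw [← hS1] at hE2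
  set E1 : ℝ := S2 + Real.pi^2/12 with hE1d
  set E2 : ℝ := S1 - Real.log 2 with hE2d
  have hval : (∫ y in (-Real.pi)..Real.pi, y ^ 2 * fejerKernel m y)
      - 4 * Real.log 2 / ((m:ℝ) + 1) = 4*E1 + 4*E2/((m:ℝ)+1) := by
    rw [fejer_integral m, hsplit, hE1d, hE2d]
    field_simp
    ring
  rw [hval]
  have hb1 : |4*E1| ≤ 4/((m:ℝ)+1)^2 := by
    rw [abs_mul, abs_of_nonneg (by norm_num : (0:ℝ) ≤ 4)]
    calc 4 * |E1| ≤ 4 * (1/((m:ℝ)+1)^2) := by linarith [hE1]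
      _ = 4/((m:ℝ)+1)^2 := by ring
  have hb2 : |4*E2/((m:ℝ)+1)| ≤ 4/((m:ℝ)+1)^2 := by
    rw [abs_div, abs_mul, abs_of_nonneg (by norm_num : (0:ℝ) ≤ 4),
      abs_of_pos hm1]
    rw [div_le_div_iff₀ hm1 (by positivity)]
    calc 4 * |E2| * ((m:ℝ)+1)^2 ≤ 4 * (1/((m:ℝ)+1)) * ((m:ℝ)+1)^2 := by
          apply mul_le_mul_of_nonneg_right _ (by positivity)
          linarith [hE2]
      _ = 4 * ((m:ℝ)+1) := by field_simp
  calc |4*E1 + 4*E2/((m:ℝ)+1)| ≤ |4*E1| + |4*E2/((m:ℝ)+1)| := abs_add_le _ _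
    _ ≤ 4/((m:ℝ)+1)^2 + 4/((m:ℝ)+1)^2 := add_le_add hb1 hb2
    _ = 8/((m:ℝ)+1)^2 := by ring
    _ ≤ 8/(m:ℝ)^2 := by
        apply div_le_div_of_nonneg_left (by norm_num) (by positivity)
        nlinarith
end

section
/- The third absolute moment of the Fejér kernel satisfies \(\gamma(K_m) := \int_{-\pi}^{\pi} |y|^3 K_m(y)\,dy = \frac{6\pi\log 2 - 21\zeta(3)/\pi}{m+1} + O(m^{-2})\) as \(m\to\infty\). -/
open Finset

noncomputable def zeta3 : ℝ := ∑' n : ℕ, 1 / ((n : ℝ) + 1) ^ 3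

section FejerAux

open Filter Topology Real intervalIntegral

private lemma alt_partial_bound {f : ℕ → ℝ} {l : ℝ} (hfa : Antitone f)
    (hl : Tendsto (fun n => ∑ i ∈ range n, (-1 : ℝ)^i * f i) atTop (𝓝 l)) (n : ℕ) :
    |l - ∑ i ∈ range n, (-1 : ℝ)^i * f i| ≤ f n := by
  rcases Nat.even_or_odd n with ⟨k, hk⟩ | ⟨k, hk⟩
  · have hk' : n = 2 * k := by omega
    subst hk'
    have h1 := Antitone.alternating_series_le_tendsto hl hfa k
    have h2 := Antitone.tendsto_le_alternating_series hl hfa k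
    rw [sum_range_succ] at h2
    have hpow : (-1 : ℝ) ^ (2 * k) = 1 := by simp [pow_mul]
    rw [hpow, one_mul] at h2
    rw [abs_le]
    have hf0 : 0 ≤ f (2 * k) := by nlinarith [h1, h2]
    constructor <;> linarith
  · have hk' : n = 2 * k + 1 := by omega
    subst hk'
    have h1 := Antitone.tendsto_le_alternating_series hl hfa k
    have h2 := Antitone.alternating_series_le_tendsto hl hfa (k + 1)
    have : 2 * (k + 1) = 2 * k + 1 + 1 := by ring
    rw [this, sum_range_succ] at h2
    have hpow : (-1 : ℝ) ^ (2 * k + 1) = -1 := by simp [pow_succ, pow_mul]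
    rw [hpow, neg_one_mul] at h2
    rw [abs_le]
    constructor <;> linarith

private lemma pos_partial_bound {f g : ℕ → ℝ} {l : ℝ} {n : ℕ}
    (hl : Tendsto (fun N => ∑ i ∈ range N, f i) atTop (𝓝 l))
    (hfg : ∀ i, n ≤ i → f i ≤ g i - g (i + 1)) (hg : ∀ i, 0 ≤ g i)
    (hf : ∀ i, 0 ≤ f i) :
    |l - ∑ i ∈ range n, f i| ≤ g n := by
  have key : ∀ N, n ≤ N → ∑ i ∈ range N, f i - ∑ i ∈ range n, f i ≤ g n - g N := by
    intro N hN
    induction N, hN using Nat.le_induction with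
    | base => simp
    | succ N hN ih => rw [sum_range_succ]; have := hfg N hN; linarith
  have mono : Monotone fun N => ∑ i ∈ range N, f i := by
    apply monotone_nat_of_le_succ
    intro N; rw [sum_range_succ]; linarith [hf N]
  have h1 : l - ∑ i ∈ range n, f i ≤ g n := by
    have ht : Tendsto (fun N => ∑ i ∈ range N, f i - ∑ i ∈ range n, f i) atTop
        (𝓝 (l - ∑ i ∈ range n, f i)) := hl.sub_const _
    refine le_of_tendsto ht ?_
    filter_upwards [eventually_ge_atTop n] with N hN
    have := key N hN
    linarith [hg N]
  have h2 : ∑ i ∈ range n, f i ≤ l := mono.ge_of_tendsto hl n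
  rw [abs_le]
  constructor <;> [linarith [hg n]; linarith]

private lemma hasSum_shift {p : ℕ} {M : ℝ}
    (h : HasSum (fun n : ℕ => 1 / (n : ℝ) ^ p) M) (hp : 1 ≤ p) :
    HasSum (fun n : ℕ => 1 / ((n : ℝ) + 1) ^ p) M := by
  have h' : HasSum (fun n : ℕ => 1 / (n : ℝ) ^ p) (M + ∑ i ∈ range 1, 1 / (i : ℝ) ^ p) := by
    have h0 : ∑ i ∈ range 1, 1 / (i : ℝ) ^ p = 0 := by
      simp [zero_pow (show p ≠ 0 by omega)]
    rw [h0, add_zero]; exact h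
  have := (hasSum_nat_add_iff (f := fun n : ℕ => 1 / (n : ℝ) ^ p) 1).2 h'
  convert this using 2 with n
  · rfl
  push_cast
  ring_nf

private lemma hasSum_alt {p : ℕ} {M : ℝ}
    (h : HasSum (fun n : ℕ => 1 / ((n : ℝ) + 1) ^ p) M) :
    HasSum (fun n : ℕ => (-1 : ℝ) ^ n * (1 / ((n : ℝ) + 1) ^ p)) (M - 2 * ((2 ^ p)⁻¹ * M)) := by
  set f : ℕ → ℝ := fun n => 1 / ((n : ℝ) + 1) ^ p with hf
  have hodd : HasSum (fun k : ℕ => f (2 * k + 1)) (((2 : ℝ) ^ p)⁻¹ * M) := by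
    have heq : (fun k : ℕ => f (2 * k + 1)) = fun k : ℕ => ((2 : ℝ) ^ p)⁻¹ * f k := by
      funext k
      simp only [hf]
      push_cast
      rw [show (2 * (k : ℝ) + 1 + 1) = 2 * ((k : ℝ) + 1) by ring, mul_pow,
        one_div, one_div, mul_inv]
    rw [heq]
    exact h.mul_left _
  have hsumm_even : Summable (fun k : ℕ => f (2 * k)) :=
    h.summable.comp_injective (mul_right_injective₀ (two_ne_zero' ℕ))
  have heven : HasSum (fun k : ℕ => f (2 * k)) (M - ((2 : ℝ) ^ p)⁻¹ * M) := by
    have htot := hsumm_even.hasSum.even_add_odd hodd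
    have h1 : M = (∑' k, f (2 * k)) + ((2 : ℝ) ^ p)⁻¹ * M := h.unique htot
    have h2 : (∑' k, f (2 * k)) = M - ((2 : ℝ) ^ p)⁻¹ * M := by linarith
    rw [← h2]; exact hsumm_even.hasSum
  have he2 : HasSum (fun k : ℕ => (-1 : ℝ) ^ (2 * k) * f (2 * k)) (M - ((2 : ℝ) ^ p)⁻¹ * M) := by
    simpa [pow_mul] using heven
  have ho2 : HasSum (fun k : ℕ => (-1 : ℝ) ^ (2 * k + 1) * f (2 * k + 1))
      (-(((2 : ℝ) ^ p)⁻¹ * M)) := by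
    simpa [pow_succ, pow_mul] using hodd.neg
  have halt := HasSum.even_add_odd (f := fun n : ℕ => (-1 : ℝ) ^ n * f n) he2 ho2
  convert halt using 1
  ring

private lemma alt_harmonic_partial (n : ℕ) :
    ∑ i ∈ range (2 * n), (-1 : ℝ) ^ i * (1 / ((i : ℝ) + 1))
      = (harmonic (2 * n) : ℝ) - (harmonic n : ℝ) := by
  induction n with
  | zero => simp
  | succ n ih =>
    have h2 : 2 * (n + 1) = 2 * n + 1 + 1 := by ring
    rw [h2, sum_range_succ, sum_range_succ, ih]
    have e1 : harmonic (2 * n + 1 + 1) = harmonic (2 * n + 1) + (((2 * n + 1 + 1 : ℕ) : ℚ))⁻¹ :=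
      harmonic_succ _
    have e2 : harmonic (2 * n + 1) = harmonic (2 * n) + (((2 * n + 1 : ℕ) : ℚ))⁻¹ :=
      harmonic_succ _
    have e3 : harmonic (n + 1) = harmonic n + (((n + 1 : ℕ) : ℚ))⁻¹ := harmonic_succ _
    rw [e1, e2, e3]
    push_cast
    have hp1 : (-1 : ℝ) ^ (2 * n) = 1 := by simp [pow_mul]
    have hp2 : (-1 : ℝ) ^ (2 * n + 1) = -1 := by simp [pow_succ, pow_mul]
    rw [hp1, hp2]
    have h1 : (2 * (n : ℝ) + 1) ≠ 0 := by positivity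
    have h3 : (2 * (n : ℝ) + 1 + 1) ≠ 0 := by positivity
    have h4 : ((n : ℝ) + 1) ≠ 0 := by positivity
    field_simp
    ring

private lemma tendsto_alt_harmonic :
    Tendsto (fun n : ℕ => ∑ i ∈ range n, (-1 : ℝ) ^ i * (1 / ((i : ℝ) + 1))) atTop
      (𝓝 (Real.log 2)) := by
  have hfa : Antitone fun i : ℕ => 1 / ((i : ℝ) + 1) := by
    intro a b hab
    apply one_div_le_one_div_of_le (by positivity)
    exact_mod_cast by exact_mod_cast add_le_add_left (Nat.cast_le.2 hab) 1
  have hf0 : Tendsto (fun i : ℕ => 1 / ((i : ℝ) + 1)) atTop (𝓝 0) :=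
    tendsto_one_div_add_atTop_nhds_zero_nat
  obtain ⟨l, hl⟩ := hfa.tendsto_alternating_series_of_tendsto_zero hf0
  have htwo : Tendsto (fun n : ℕ => 2 * n) atTop atTop :=
    Filter.tendsto_atTop_atTop.2 fun b => ⟨b, fun a ha => by omega⟩
  -- the even partial sums tend to log 2
  have hH : Tendsto (fun n : ℕ => (harmonic (2 * n) : ℝ) - (harmonic n : ℝ)) atTop
      (𝓝 (Real.log 2)) := by
    have h1 := ((Real.tendsto_harmonic_sub_log.comp htwo).sub
      Real.tendsto_harmonic_sub_log).add (tendsto_const_nhds (x := Real.log 2))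
    rw [show eulerMascheroniConstant - eulerMascheroniConstant + Real.log 2 = Real.log 2
      by ring] at h1
    apply h1.congr'
    filter_upwards [eventually_ge_atTop 1] with n hn
    have hn0 : (n : ℝ) ≠ 0 := by
      simp only [ne_eq, Nat.cast_eq_zero]
      omega
    simp only [Function.comp_apply]
    push_cast
    rw [Real.log_mul two_ne_zero hn0]
    ring
  have hsub : Tendsto (fun n : ℕ => ∑ i ∈ range (2 * n), (-1 : ℝ) ^ i * (1 / ((i : ℝ) + 1)))
      atTop (𝓝 l) := hl.comp htwo
  have : l = Real.log 2 := by
    apply tendsto_nhds_unique hsub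
    apply hH.congr
    intro n
    rw [alt_harmonic_partial]
  rwa [this] at hl

private lemma refl_integral (f : ℝ → ℝ) (heven : ∀ x, f (-x) = f x)
    (hcont : Continuous f) :
    ∫ y in (-π)..π, f y = 2 * ∫ y in (0:ℝ)..π, f y := by
  have hsplit := intervalIntegral.integral_add_adjacent_intervals
    (a := -π) (b := 0) (c := π)
    (hcont.intervalIntegrable (μ := MeasureTheory.volume) _ _)
    (hcont.intervalIntegrable (μ := MeasureTheory.volume) _ _)
  have hrefl : ∫ y in (-π)..(0:ℝ), f y = ∫ y in (0:ℝ)..π, f y := by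
    have h := intervalIntegral.integral_comp_neg (a := (0:ℝ)) (b := π) f
    rw [neg_zero] at h
    rw [← h]
    apply intervalIntegral.integral_congr
    intro x _
    exact heven x
  rw [← hsplit, hrefl]
  ring

private lemma integral_cube_cos (k : ℕ) (hk : 1 ≤ k) :
    ∫ y in (0:ℝ)..π, y ^ 3 * Real.cos (k * y)
      = 3 * π ^ 2 * (-1 : ℝ) ^ k / k ^ 2 - 6 * (-1 : ℝ) ^ k / k ^ 4 + 6 / k ^ 4 := by
  set c : ℝ := (k : ℝ) with hc
  have hc0 : c ≠ 0 := by
    simp only [hc, ne_eq, Nat.cast_eq_zero]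
    omega
  set F : ℝ → ℝ := fun y => y ^ 3 * Real.sin (c * y) / c + 3 * (y ^ 2 * Real.cos (c * y) / c ^ 2)
    - 6 * (y * Real.sin (c * y) / c ^ 3) - 6 * (Real.cos (c * y) / c ^ 4) with hF
  have hder : ∀ y : ℝ, HasDerivAt F (y ^ 3 * Real.cos (c * y)) y := by
    intro y
    have hid : HasDerivAt (fun y : ℝ => c * y) c y := by
      simpa using (hasDerivAt_id y).const_mul c
    have hsin : HasDerivAt (fun y : ℝ => Real.sin (c * y)) (Real.cos (c * y) * c) y :=
      (Real.hasDerivAt_sin (c * y)).comp y hid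
    have hcos : HasDerivAt (fun y : ℝ => Real.cos (c * y)) (-Real.sin (c * y) * c) y :=
      (Real.hasDerivAt_cos (c * y)).comp y hid
    have h1 := ((hasDerivAt_pow 3 y).mul hsin).div_const c
    have h2 := (((hasDerivAt_pow 2 y).mul hcos).div_const (c ^ 2)).const_mul (3 : ℝ)
    have h3 := ((((hasDerivAt_id' y)).mul hsin).div_const (c ^ 3)).const_mul (6 : ℝ)
    have h4 := ((hcos.div_const (c ^ 4)).const_mul (6 : ℝ))
    have H := ((h1.add h2).sub h3).sub h4
    convert H using 1
    · rfl
    · rfl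
    · rfl
    field_simp
    ring
  have hcont : Continuous fun y : ℝ => y ^ 3 * Real.cos (c * y) := by
    exact (continuous_pow 3).mul (Real.continuous_cos.comp (continuous_const.mul continuous_id))
  have hint := intervalIntegral.integral_eq_sub_of_hasDerivAt
    (a := (0:ℝ)) (b := π) (f := F) (f' := fun y => y ^ 3 * Real.cos (c * y))
    (fun y _ => hder y) (hcont.intervalIntegrable _ _)
  rw [hint, hF]
  simp only [hc]
  rw [Real.sin_nat_mul_pi]
  have hcos_pi : Real.cos (k * π) = (-1 : ℝ) ^ k := by
    simpa using Real.cos_nat_mul_pi_sub 0 k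
  rw [hcos_pi]
  simp only [mul_zero, zero_mul, Real.cos_zero, Real.sin_zero]
  field_simp
  ring

private lemma integral_abs_cube_cos (k : ℕ) (hk : 1 ≤ k) :
    ∫ y in (-π)..π, |y| ^ 3 * Real.cos (k * y)
      = 6 * π ^ 2 * (-1 : ℝ) ^ k / k ^ 2 - 12 * (-1 : ℝ) ^ k / k ^ 4 + 12 / k ^ 4 := by
  have hcont : Continuous fun y : ℝ => |y| ^ 3 * Real.cos (k * y) :=
    (continuous_abs.pow 3).mul (Real.continuous_cos.comp (continuous_const.mul continuous_id))
  rw [refl_integral _ (fun x => by rw [abs_neg, mul_neg, Real.cos_neg]) hcont]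
  have hcongr : ∫ y in (0:ℝ)..π, |y| ^ 3 * Real.cos (k * y)
      = ∫ y in (0:ℝ)..π, y ^ 3 * Real.cos (k * y) := by
    apply intervalIntegral.integral_congr
    intro y hy
    rw [Set.uIcc_of_le Real.pi_pos.le] at hy
    show |y| ^ 3 * Real.cos (k * y) = y ^ 3 * Real.cos (k * y)
    rw [abs_of_nonneg hy.1]
  rw [hcongr, integral_cube_cos k hk]
  ring

private lemma integral_abs_cube :
    ∫ y in (-π)..π, |y| ^ 3 = π ^ 4 / 2 := by
  rw [refl_integral (fun y => |y| ^ 3) (fun x => by rw [abs_neg]) (continuous_abs.pow 3)]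
  have hcongr : ∫ y in (0:ℝ)..π, |y| ^ 3 = ∫ y in (0:ℝ)..π, y ^ 3 := by
    apply intervalIntegral.integral_congr
    intro y hy
    rw [Set.uIcc_of_le Real.pi_pos.le] at hy
    show |y| ^ 3 = y ^ 3
    rw [abs_of_nonneg hy.1]
  rw [hcongr, integral_pow]
  ring

private lemma moment_eq (m : ℕ) :
    ∫ y in (-π)..π, |y| ^ 3 * fejerKernel m y
      = π ^ 3 / 4 + ∑ k ∈ Icc 1 m, ((1 - (k : ℝ) / (m + 1)) * (1 / π)) *
          (6 * π ^ 2 * (-1 : ℝ) ^ k / k ^ 2 - 12 * (-1 : ℝ) ^ k / k ^ 4 + 12 / k ^ 4) := by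
  have hπ : (0 : ℝ) < π := Real.pi_pos
  have hfun : ∀ y : ℝ, |y| ^ 3 * fejerKernel m y
      = |y| ^ 3 * (1 / (2 * π)) + ∑ k ∈ Icc 1 m,
          ((1 - (k : ℝ) / (m + 1)) * (1 / π)) * (|y| ^ 3 * Real.cos (k * y)) := by
    intro y
    simp only [fejerKernel, mul_add, Finset.mul_sum]
    congr 1
    apply Finset.sum_congr rfl
    intro k _
    ring
  have hcont_cos : ∀ k : ℕ, Continuous fun y : ℝ => ((1 - (k : ℝ) / (m + 1)) * (1 / π))
      * (|y| ^ 3 * Real.cos (k * y)) := fun k =>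
    continuous_const.mul ((continuous_abs.pow 3).mul
      (Real.continuous_cos.comp (continuous_const.mul continuous_id)))
  have h1 : IntervalIntegrable (fun y : ℝ => |y| ^ 3 * (1 / (2 * π)))
      MeasureTheory.volume (-π) π :=
    ((continuous_abs.pow 3).mul continuous_const).intervalIntegrable _ _
  have h2 : IntervalIntegrable (fun y : ℝ => ∑ k ∈ Icc 1 m,
      ((1 - (k : ℝ) / (m + 1)) * (1 / π)) * (|y| ^ 3 * Real.cos (k * y)))
      MeasureTheory.volume (-π) π :=
    (continuous_finset_sum _ fun k _ => hcont_cos k).intervalIntegrable _ _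
  simp only [hfun]
  rw [intervalIntegral.integral_add h1 h2,
    intervalIntegral.integral_finset_sum
      (fun k _ => (hcont_cos k).intervalIntegrable _ _)]
  congr 1
  · rw [intervalIntegral.integral_mul_const, integral_abs_cube]
    field_simp
    ring
  · apply Finset.sum_congr rfl
    intro k hk
    rw [intervalIntegral.integral_const_mul, integral_abs_cube_cos k (mem_Icc.1 hk).1]

private lemma sum_identity (m : ℕ) :
    ∑ k ∈ Icc 1 m, ((1 - (k : ℝ) / (m + 1)) * (1 / π)) *
        (6 * π ^ 2 * (-1 : ℝ) ^ k / k ^ 2 - 12 * (-1 : ℝ) ^ k / k ^ 4 + 12 / k ^ 4)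
      = (-(6 * π)) * ∑ i ∈ range m, (-1 : ℝ) ^ i * (1 / ((i : ℝ) + 1) ^ 2)
        + (12 / π) * ∑ i ∈ range m, (-1 : ℝ) ^ i * (1 / ((i : ℝ) + 1) ^ 4)
        + (12 / π) * ∑ i ∈ range m, 1 / ((i : ℝ) + 1) ^ 4
        - (1 / ((m : ℝ) + 1)) *
          ((-(6 * π)) * ∑ i ∈ range m, (-1 : ℝ) ^ i * (1 / ((i : ℝ) + 1))
            + (12 / π) * ∑ i ∈ range m, (-1 : ℝ) ^ i * (1 / ((i : ℝ) + 1) ^ 3)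
            + (12 / π) * ∑ i ∈ range m, 1 / ((i : ℝ) + 1) ^ 3) := by
  have hπ : (0 : ℝ) < π := Real.pi_pos
  rw [← Finset.Ico_add_one_right_eq_Icc, Finset.sum_Ico_eq_sum_range]
  simp only [Finset.mul_sum, ← Finset.sum_add_distrib, ← Finset.sum_sub_distrib]
  apply Finset.sum_congr rfl
  intro i _
  have hπ0 : π ≠ 0 := hπ.ne'
  have hi : ((i : ℝ) + 1) ≠ 0 := by positivity
  have hm0 : ((m : ℝ) + 1) ≠ 0 := by positivity
  have hpow : (-1 : ℝ) ^ (1 + i) = -(-1 : ℝ) ^ i := by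
    rw [pow_add]; ring
  push_cast
  rw [hpow]
  field_simp
  ring

end FejerAux

set_option maxHeartbeats 2000000 in
theorem fejerKernel_third_abs_moment :
    ∃ C : ℝ, 0 < C ∧ ∀ m : ℕ, 1 ≤ m →
      |(∫ y in (-Real.pi)..Real.pi, |y| ^ 3 * fejerKernel m y)
          - (6 * Real.pi * Real.log 2 - 21 * zeta3 / Real.pi) / (m + 1)|
        ≤ C / (m : ℝ) ^ 2 := by
  refine ⟨12 * Real.pi + 48 / Real.pi, by positivity, ?_⟩
  intro m hm
  have hπ : (0 : ℝ) < Real.pi := Real.pi_pos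
  have hπ0 : Real.pi ≠ 0 := hπ.ne'
  have hm1 : (1 : ℝ) ≤ (m : ℝ) := by exact_mod_cast hm
  have hm0 : (0 : ℝ) < (m : ℝ) := by linarith
  have hant : ∀ p : ℕ, Antitone fun i : ℕ => 1 / ((i : ℝ) + 1) ^ p := by
    intro p a b hab
    have hab' : ((a : ℝ) + 1) ≤ ((b : ℝ) + 1) := by
      have : (a : ℝ) ≤ b := Nat.cast_le.2 hab
      linarith
    exact one_div_le_one_div_of_le (by positivity) (pow_le_pow_left₀ (by positivity) hab' p)
  have hant1 : Antitone fun i : ℕ => 1 / ((i : ℝ) + 1) := by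
    intro a b hab
    have : (a : ℝ) ≤ b := Nat.cast_le.2 hab
    exact one_div_le_one_div_of_le (by positivity) (by linarith)
  have hQ2 := hasSum_shift hasSum_zeta_two (by norm_num)
  have hQ4 := hasSum_shift hasSum_zeta_four (by norm_num)
  have hsum3 : Summable fun n : ℕ => 1 / ((n : ℝ) + 1) ^ 3 := by
    have h := Real.summable_one_div_nat_pow.2 (show 1 < 3 by norm_num)
    have h2 := (_root_.summable_nat_add_iff (f := fun n : ℕ => 1 / (n : ℝ) ^ 3) 1).2 h
    exact h2.congr fun n => by push_cast; ring
  have hQ3 : HasSum (fun n : ℕ => 1 / ((n : ℝ) + 1) ^ 3) zeta3 := hsum3.hasSum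
  have hP1 := tendsto_alt_harmonic
  have hP2 := (hasSum_alt hQ2).tendsto_sum_nat
  have hP3 := (hasSum_alt hQ3).tendsto_sum_nat
  have hP4 := (hasSum_alt hQ4).tendsto_sum_nat
  have b1 := alt_partial_bound hant1 hP1 m
  have b2 := alt_partial_bound (hant 2) hP2 m
  have b3 := alt_partial_bound (hant 3) hP3 m
  have b4 := alt_partial_bound (hant 4) hP4 m
  -- tail bounds for the non-alternating series
  have q3 : |zeta3 - ∑ i ∈ range m, 1 / ((i : ℝ) + 1) ^ 3| ≤ 1 / (2 * (m : ℝ) ^ 2) := by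
    refine pos_partial_bound (g := fun i : ℕ => 1 / (2 * (i : ℝ) ^ 2)) (n := m)
      hQ3.tendsto_sum_nat ?_ (fun i => by positivity) (fun i => by positivity)
    intro i hi
    have hx : (1 : ℝ) ≤ (i : ℝ) := by exact_mod_cast le_trans hm hi
    have h1 : (0 : ℝ) < 2 * (i : ℝ) ^ 2 := by positivity
    have h2 : (0 : ℝ) < 2 * ((i : ℝ) + 1) ^ 2 := by positivity
    push_cast
    rw [div_sub_div _ _ h1.ne' h2.ne', div_le_div_iff₀ (by positivity) (by positivity)]
    have step : 4 * (i : ℝ) ^ 2 ≤ (4 * (i : ℝ) + 2) * ((i : ℝ) + 1) := by nlinarith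
    nlinarith [mul_le_mul_of_nonneg_left step (sq_nonneg ((i : ℝ) + 1))]
  have q4 : |Real.pi ^ 4 / 90 - ∑ i ∈ range m, 1 / ((i : ℝ) + 1) ^ 4|
      ≤ 1 / (2 * (m : ℝ) ^ 3) := by
    refine pos_partial_bound (g := fun i : ℕ => 1 / (2 * (i : ℝ) ^ 3)) (n := m)
      hQ4.tendsto_sum_nat ?_ (fun i => by positivity) (fun i => by positivity)
    intro i hi
    have hx : (1 : ℝ) ≤ (i : ℝ) := by exact_mod_cast le_trans hm hi
    have h1 : (0 : ℝ) < 2 * (i : ℝ) ^ 3 := by positivity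
    have h2 : (0 : ℝ) < 2 * ((i : ℝ) + 1) ^ 3 := by positivity
    push_cast
    rw [div_sub_div _ _ h1.ne' h2.ne', div_le_div_iff₀ (by positivity) (by positivity)]
    have step : 4 * (i : ℝ) ^ 3 ≤ (2 * ((i : ℝ) + 1) ^ 3 - 2 * (i : ℝ) ^ 3) * ((i : ℝ) + 1) := by
      nlinarith
    nlinarith [mul_le_mul_of_nonneg_left step
      (pow_nonneg (by positivity : (0 : ℝ) ≤ (i : ℝ) + 1) 3)]
  -- the difference identity
  have hdiff : (∫ y in (-Real.pi)..Real.pi, |y| ^ 3 * fejerKernel m y)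
      - (6 * Real.pi * Real.log 2 - 21 * zeta3 / Real.pi) / (m + 1)
    = 6 * Real.pi * ((Real.pi ^ 2 / 6 - 2 * ((2 ^ 2)⁻¹ * (Real.pi ^ 2 / 6)))
          - ∑ i ∈ range m, (-1 : ℝ) ^ i * (1 / ((i : ℝ) + 1) ^ 2))
      - (12 / Real.pi) * ((Real.pi ^ 4 / 90 - 2 * ((2 ^ 4)⁻¹ * (Real.pi ^ 4 / 90)))
          - ∑ i ∈ range m, (-1 : ℝ) ^ i * (1 / ((i : ℝ) + 1) ^ 4))
      - (12 / Real.pi) * (Real.pi ^ 4 / 90 - ∑ i ∈ range m, 1 / ((i : ℝ) + 1) ^ 4)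
      - (1 / ((m : ℝ) + 1)) *
        (6 * Real.pi * (Real.log 2 - ∑ i ∈ range m, (-1 : ℝ) ^ i * (1 / ((i : ℝ) + 1)))
          - (12 / Real.pi) * ((zeta3 - 2 * ((2 ^ 3)⁻¹ * zeta3))
              - ∑ i ∈ range m, (-1 : ℝ) ^ i * (1 / ((i : ℝ) + 1) ^ 3))
          - (12 / Real.pi) * (zeta3 - ∑ i ∈ range m, 1 / ((i : ℝ) + 1) ^ 3)) := by
    rw [moment_eq m, sum_identity m]
    have hm2 : ((m : ℝ) + 1) ≠ 0 := by positivity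
    field_simp
    ring
  rw [hdiff]
  -- triangle inequalities
  have habs2 : ∀ x y : ℝ, |x - y| ≤ |x| + |y| := fun x y => by
    calc |x - y| = |x + -y| := by rw [sub_eq_add_neg]
      _ ≤ |x| + |-y| := abs_add_le _ _
      _ = |x| + |y| := by rw [abs_neg]
  have habs3 : ∀ x y z : ℝ, |x - y - z| ≤ |x| + |y| + |z| := fun x y z => by
    calc |x - y - z| ≤ |x - y| + |z| := habs2 _ _
      _ ≤ |x| + |y| + |z| := add_le_add_left (habs2 x y) _
  have habs4 : ∀ w x y z : ℝ, |w - x - y - z| ≤ |w| + |x| + |y| + |z| := fun w x y z => by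
    calc |w - x - y - z| ≤ |w - x - y| + |z| := habs2 _ _
      _ ≤ |w| + |x| + |y| + |z| := add_le_add_left (habs3 w x y) _
  -- leaf bounds
  have e1 : |Real.log 2 - ∑ i ∈ range m, (-1 : ℝ) ^ i * (1 / ((i : ℝ) + 1))| ≤ 1 / (m : ℝ) :=
    le_trans b1 (one_div_le_one_div_of_le hm0 (by linarith))
  have e2 : |(Real.pi ^ 2 / 6 - 2 * ((2 ^ 2)⁻¹ * (Real.pi ^ 2 / 6)))
      - ∑ i ∈ range m, (-1 : ℝ) ^ i * (1 / ((i : ℝ) + 1) ^ 2)| ≤ 1 / (m : ℝ) ^ 2 :=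
    le_trans b2 (one_div_le_one_div_of_le (by positivity) (by nlinarith))
  have e3 : |(zeta3 - 2 * ((2 ^ 3)⁻¹ * zeta3))
      - ∑ i ∈ range m, (-1 : ℝ) ^ i * (1 / ((i : ℝ) + 1) ^ 3)| ≤ 1 / (m : ℝ) :=
    le_trans b3 (one_div_le_one_div_of_le hm0 (by nlinarith))
  have e4 : |(Real.pi ^ 4 / 90 - 2 * ((2 ^ 4)⁻¹ * (Real.pi ^ 4 / 90)))
      - ∑ i ∈ range m, (-1 : ℝ) ^ i * (1 / ((i : ℝ) + 1) ^ 4)| ≤ 1 / (m : ℝ) ^ 2 :=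
    le_trans b4 (one_div_le_one_div_of_le (by positivity) (by nlinarith))
  have eq3 : |zeta3 - ∑ i ∈ range m, 1 / ((i : ℝ) + 1) ^ 3| ≤ 1 / (m : ℝ) :=
    le_trans q3 (one_div_le_one_div_of_le hm0 (by nlinarith))
  have eq4 : |Real.pi ^ 4 / 90 - ∑ i ∈ range m, 1 / ((i : ℝ) + 1) ^ 4| ≤ 1 / (m : ℝ) ^ 2 :=
    le_trans q4 (one_div_le_one_div_of_le (by positivity) (by nlinarith))
  have hfrac : 1 / ((m : ℝ) + 1) ≤ 1 / (m : ℝ) :=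
    one_div_le_one_div_of_le hm0 (by linarith)
  have hWb : |6 * Real.pi * (Real.log 2 - ∑ i ∈ range m, (-1 : ℝ) ^ i * (1 / ((i : ℝ) + 1)))
      - (12 / Real.pi) * ((zeta3 - 2 * ((2 ^ 3)⁻¹ * zeta3))
          - ∑ i ∈ range m, (-1 : ℝ) ^ i * (1 / ((i : ℝ) + 1) ^ 3))
      - (12 / Real.pi) * (zeta3 - ∑ i ∈ range m, 1 / ((i : ℝ) + 1) ^ 3)|
      ≤ 6 * Real.pi * (1 / (m : ℝ)) + (12 / Real.pi) * (1 / (m : ℝ))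
        + (12 / Real.pi) * (1 / (m : ℝ)) := by
    refine le_trans (habs3 _ _ _) ?_
    simp only [abs_mul, abs_of_pos hπ,
      show |(6 : ℝ)| = 6 from by rw [abs_of_pos]; norm_num,
      show |(12 : ℝ) / Real.pi| = 12 / Real.pi from by rw [abs_of_pos]; positivity]
    gcongr
  calc |6 * Real.pi * ((Real.pi ^ 2 / 6 - 2 * ((2 ^ 2)⁻¹ * (Real.pi ^ 2 / 6)))
          - ∑ i ∈ range m, (-1 : ℝ) ^ i * (1 / ((i : ℝ) + 1) ^ 2))
      - (12 / Real.pi) * ((Real.pi ^ 4 / 90 - 2 * ((2 ^ 4)⁻¹ * (Real.pi ^ 4 / 90)))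
          - ∑ i ∈ range m, (-1 : ℝ) ^ i * (1 / ((i : ℝ) + 1) ^ 4))
      - (12 / Real.pi) * (Real.pi ^ 4 / 90 - ∑ i ∈ range m, 1 / ((i : ℝ) + 1) ^ 4)
      - (1 / ((m : ℝ) + 1)) *
        (6 * Real.pi * (Real.log 2 - ∑ i ∈ range m, (-1 : ℝ) ^ i * (1 / ((i : ℝ) + 1)))
          - (12 / Real.pi) * ((zeta3 - 2 * ((2 ^ 3)⁻¹ * zeta3))
              - ∑ i ∈ range m, (-1 : ℝ) ^ i * (1 / ((i : ℝ) + 1) ^ 3))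
          - (12 / Real.pi) * (zeta3 - ∑ i ∈ range m, 1 / ((i : ℝ) + 1) ^ 3))|
      ≤ |6 * Real.pi * ((Real.pi ^ 2 / 6 - 2 * ((2 ^ 2)⁻¹ * (Real.pi ^ 2 / 6)))
          - ∑ i ∈ range m, (-1 : ℝ) ^ i * (1 / ((i : ℝ) + 1) ^ 2))|
        + |(12 / Real.pi) * ((Real.pi ^ 4 / 90 - 2 * ((2 ^ 4)⁻¹ * (Real.pi ^ 4 / 90)))
          - ∑ i ∈ range m, (-1 : ℝ) ^ i * (1 / ((i : ℝ) + 1) ^ 4))|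
        + |(12 / Real.pi) * (Real.pi ^ 4 / 90 - ∑ i ∈ range m, 1 / ((i : ℝ) + 1) ^ 4)|
        + |(1 / ((m : ℝ) + 1)) *
          (6 * Real.pi * (Real.log 2 - ∑ i ∈ range m, (-1 : ℝ) ^ i * (1 / ((i : ℝ) + 1)))
            - (12 / Real.pi) * ((zeta3 - 2 * ((2 ^ 3)⁻¹ * zeta3))
                - ∑ i ∈ range m, (-1 : ℝ) ^ i * (1 / ((i : ℝ) + 1) ^ 3))
            - (12 / Real.pi) * (zeta3 - ∑ i ∈ range m, 1 / ((i : ℝ) + 1) ^ 3))| :=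
        habs4 _ _ _ _
    _ ≤ 6 * Real.pi * (1 / (m : ℝ) ^ 2) + (12 / Real.pi) * (1 / (m : ℝ) ^ 2)
        + (12 / Real.pi) * (1 / (m : ℝ) ^ 2)
        + (1 / (m : ℝ)) * (6 * Real.pi * (1 / (m : ℝ)) + (12 / Real.pi) * (1 / (m : ℝ))
            + (12 / Real.pi) * (1 / (m : ℝ))) := by
        simp only [abs_mul, abs_of_pos hπ,
          show |(6 : ℝ)| = 6 from by rw [abs_of_pos]; norm_num,
          show |(12 : ℝ) / Real.pi| = 12 / Real.pi from by rw [abs_of_pos]; positivity,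
          show |1 / ((m : ℝ) + 1)| = 1 / ((m : ℝ) + 1) from by rw [abs_of_pos]; positivity]
        gcongr
    _ = (12 * Real.pi + 48 / Real.pi) / (m : ℝ) ^ 2 := by
        field_simp
        ring
end

section
/- The fourth moment of the Fejér kernel satisfies \(m_4(K_m) := \int_{-\pi}^{\pi} y^4 K_m(y)\,dy = \frac{8\pi^2\log 2 - 36\zeta(3)}{m} + O(m^{-2})\) as \(m\to\infty\). -/
open Finset

namespace FejerAux

open Filter Topology Real intervalIntegral

/-! ### Alternating series error estimate -/

lemma alt_est {f : ℕ → ℝ} (hfa : Antitone f) {l : ℝ}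
    (hfl : Tendsto (fun n => ∑ i ∈ range n, (-1 : ℝ)^i * f i) atTop (𝓝 l)) (n : ℕ) :
    |∑ i ∈ range n, (-1 : ℝ)^i * f i - l| ≤ f n := by
  rcases Nat.even_or_odd n with ⟨k, hk⟩ | ⟨k, hk⟩
  · have hk' : n = 2*k := by omega
    subst hk'
    have h1 : ∑ i ∈ range (2*k), (-1:ℝ)^i * f i ≤ l :=
      hfa.alternating_series_le_tendsto hfl k
    have h2 : l ≤ ∑ i ∈ range (2*k + 1), (-1:ℝ)^i * f i :=
      hfa.tendsto_le_alternating_series hfl k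
    rw [sum_range_succ] at h2
    have hpow : ((-1:ℝ)^(2*k)) = 1 := by simp [pow_mul]
    rw [hpow, one_mul] at h2
    rw [abs_sub_le_iff]
    exact ⟨by linarith, by linarith⟩
  · have hk' : n = 2*k + 1 := by omega
    subst hk'
    have h1 : l ≤ ∑ i ∈ range (2*k + 1), (-1:ℝ)^i * f i :=
      hfa.tendsto_le_alternating_series hfl k
    have h2 : ∑ i ∈ range (2*(k+1)), (-1:ℝ)^i * f i ≤ l :=
      hfa.alternating_series_le_tendsto hfl (k+1)
    have he : (2:ℕ)*(k+1) = (2*k+1) + 1 := by ring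
    rw [he, sum_range_succ] at h2
    have hpow : ((-1:ℝ)^(2*k+1)) = -1 := by simp [pow_succ, pow_mul]
    rw [hpow, neg_one_mul] at h2
    rw [abs_sub_le_iff]
    exact ⟨by linarith, by linarith⟩

/-! ### Alternating p-series sums -/

lemma altHasSum (p : ℕ) (Z : ℝ) (h : HasSum (fun n : ℕ => 1/((n:ℝ)+1)^p) Z) :
    HasSum (fun n : ℕ => (-1:ℝ)^n * (1/((n:ℝ)+1)^p)) ((1 - 2/2^p) * Z) := by
  set g : ℕ → ℝ := fun n => if Odd n then 1/((n:ℝ)+1)^p else 0 with hgdef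
  have hodd0 : HasSum (fun j : ℕ => (1/(2:ℝ)^p) * (1/((j:ℝ)+1)^p)) ((1/2^p) * Z) := h.mul_left _
  have hinj : Function.Injective (fun j : ℕ => 2*j+1) := fun a b hab => by
    simpa using hab
  have hco : (g ∘ fun j : ℕ => 2*j+1) = fun j : ℕ => (1/(2:ℝ)^p) * (1/((j:ℝ)+1)^p) := by
    funext j
    have : Odd (2*j+1) := ⟨j, by ring⟩
    simp only [hgdef, Function.comp_apply, this, if_true]
    push_cast
    rw [div_mul_div_comm, one_mul, ← mul_pow]
    ring_nf
  have hodd : HasSum (g ∘ fun j : ℕ => 2*j+1) ((1/2^p) * Z) := by rw [hco]; exact hodd0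
  have hsupp : ∀ x ∉ Set.range (fun j : ℕ => 2*j+1), g x = 0 := by
    intro x hx
    have : ¬ Odd x := by
      rintro ⟨j, hj⟩
      exact hx ⟨j, by simp [hj]⟩
    simp [hgdef, this]
  have hgsum : HasSum g ((1/2^p) * Z) := (hinj.hasSum_iff hsupp).mp hodd
  have hfin : HasSum (fun n : ℕ => 1/((n:ℝ)+1)^p - 2 * g n) (Z - 2*((1/2^p)*Z)) :=
    h.sub (hgsum.mul_left 2)
  have : (fun n : ℕ => 1/((n:ℝ)+1)^p - 2 * g n)
      = fun n : ℕ => (-1:ℝ)^n * (1/((n:ℝ)+1)^p) := by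
    funext n
    rcases Nat.even_or_odd n with he | ho
    · have : ¬ Odd n := by simp [Nat.not_odd_iff_even, he]
      simp [hgdef, this, he.neg_one_pow]
    · simp [hgdef, ho, ho.neg_one_pow]
      ring
  rw [this] at hfin
  convert hfin using 1
  ring

lemma shift_hasSum {p : ℕ} (hp : 1 ≤ p) {Z : ℝ}
    (h : HasSum (fun n : ℕ => 1/((n:ℝ))^p) Z) :
    HasSum (fun n : ℕ => 1/((n:ℝ)+1)^p) Z := by
  have key : HasSum (fun n : ℕ => 1/(((n+1:ℕ)):ℝ)^p) Z :=
    (hasSum_nat_add_iff (f := fun n : ℕ => 1/((n:ℝ))^p) 1).mpr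
      (by simpa [zero_pow (by omega : p ≠ 0)] using h)
  convert key using 2 with n
  push_cast
  ring_nf

lemma hasSum_shift2 : HasSum (fun n : ℕ => 1/((n:ℝ)+1)^2) (π^2/6) :=
  shift_hasSum one_le_two hasSum_zeta_two

lemma hasSum_shift4 : HasSum (fun n : ℕ => 1/((n:ℝ)+1)^4) (π^4/90) :=
  shift_hasSum (by norm_num) hasSum_zeta_four

lemma hasSum_shift3 : HasSum (fun n : ℕ => 1/((n:ℝ)+1)^3) zeta3 := by
  have hs : Summable (fun n : ℕ => 1/((n:ℝ)+1)^3) := by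
    have h3 : Summable (fun n : ℕ => 1/((n:ℝ))^3) :=
      Real.summable_one_div_nat_pow.mpr (by norm_num)
    have := (summable_nat_add_iff (f := fun n : ℕ => 1/((n:ℝ))^3) 1).mpr h3
    refine this.congr fun n => ?_
    push_cast
    ring_nf
  exact hs.hasSum

/-! ### Partial sums -/

noncomputable def Sp (p : ℕ) (n : ℕ) : ℝ := ∑ i ∈ range n, (-1:ℝ)^i * (1/((i:ℝ)+1)^p)

lemma ant (p : ℕ) : Antitone (fun i : ℕ => 1/((i:ℝ)+1)^p) := by
  intro a b hab
  apply one_div_le_one_div_of_le (by positivity)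
  apply pow_le_pow_left₀ (by positivity)
  exact_mod_cast by omega

lemma tendsto_Sp2 : Tendsto (Sp 2) atTop (𝓝 (π^2/12)) := by
  have := (altHasSum 2 _ hasSum_shift2).tendsto_sum_nat
  have hv : (1 - 2/(2:ℝ)^2) * (π^2/6) = π^2/12 := by norm_num; ring
  rw [hv] at this
  exact this

lemma tendsto_Sp4 : Tendsto (Sp 4) atTop (𝓝 (7*π^4/720)) := by
  have := (altHasSum 4 _ hasSum_shift4).tendsto_sum_nat
  have hv : (1 - 2/(2:ℝ)^4) * (π^4/90) = 7*π^4/720 := by norm_num; ring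
  rw [hv] at this
  exact this

lemma tendsto_Sp3 : Tendsto (Sp 3) atTop (𝓝 (3/4 * zeta3)) := by
  have := (altHasSum 3 _ hasSum_shift3).tendsto_sum_nat
  have hv : (1 - 2/(2:ℝ)^3) * zeta3 = 3/4 * zeta3 := by ring
  rw [hv] at this
  exact this

/-! ### Alternating harmonic series -/

lemma Sp1_even (n : ℕ) : Sp 1 (2*n) = ((harmonic (2*n) : ℚ) : ℝ) - ((harmonic n : ℚ) : ℝ) := by
  induction n with
  | zero => simp [Sp, harmonic]
  | succ n ih =>
    have h2 : 2*(n+1) = (2*n + 1) + 1 := by ring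
    rw [h2, Sp, sum_range_succ, sum_range_succ, ← Sp]
    have e1 : harmonic (2*n+1+1) = harmonic (2*n) + (↑(2*n+1))⁻¹ + (↑(2*n+1+1))⁻¹ := by
      rw [harmonic_succ, harmonic_succ]
    have e2 : harmonic (n+1) = harmonic n + (↑(n+1))⁻¹ := harmonic_succ n
    rw [e1, e2, ih]
    have hp1 : ((-1:ℝ))^(2*n) = 1 := by simp [pow_mul]
    have hp2 : ((-1:ℝ))^(2*n+1) = -1 := by simp [pow_succ, pow_mul]
    rw [hp1, hp2]
    push_cast
    have hn1 : ((n:ℝ)+1) ≠ 0 := by positivity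
    have hn2 : (2*(n:ℝ)+1) ≠ 0 := by positivity
    have hn3 : (2*(n:ℝ)+1+1) ≠ 0 := by positivity
    field_simp
    ring

lemma tendsto_Sp1 : Tendsto (Sp 1) atTop (𝓝 (Real.log 2)) := by
  have hfa : Antitone (fun i : ℕ => 1/((i:ℝ)+1)^1) := ant 1
  have hf0 : Tendsto (fun i : ℕ => 1/((i:ℝ)+1)^1) atTop (𝓝 0) := by
    simpa using tendsto_one_div_add_atTop_nhds_zero_nat (𝕜 := ℝ)
  obtain ⟨l, hl⟩ := hfa.tendsto_alternating_series_of_tendsto_zero hf0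
  have hl' : Tendsto (Sp 1) atTop (𝓝 l) := hl
  have h2n : Tendsto (fun n => Sp 1 (2*n)) atTop (𝓝 l) :=
    hl'.comp (tendsto_atTop_mono (fun n => Nat.le_mul_of_pos_left n two_pos) tendsto_id)
  have hH : Tendsto (fun n : ℕ => ((harmonic (2*n) : ℚ) : ℝ) - ((harmonic n : ℚ) : ℝ))
      atTop (𝓝 (Real.log 2)) := by
    have t1 : Tendsto (fun n : ℕ => ((harmonic (2*n) : ℚ) : ℝ) - Real.log (2*n))
        atTop (𝓝 Real.eulerMascheroniConstant) := by
      have := Real.tendsto_harmonic_sub_log.comp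
        (tendsto_atTop_mono (fun n : ℕ => Nat.le_mul_of_pos_left n two_pos) tendsto_id)
      refine this.congr fun n => ?_
      simp only [Function.comp_apply, id_eq]
      push_cast
      ring_nf
    have t2 := Real.tendsto_harmonic_sub_log
    have t3 : Tendsto (fun n : ℕ => (((harmonic (2*n) : ℚ) : ℝ) - Real.log (2*n))
        - (((harmonic n : ℚ) : ℝ) - Real.log n) + Real.log 2) atTop
        (𝓝 (Real.eulerMascheroniConstant - Real.eulerMascheroniConstant + Real.log 2)) :=
      ((t1.sub t2).add tendsto_const_nhds)
    rw [sub_self, zero_add] at t3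
    apply t3.congr'
    filter_upwards [eventually_ge_atTop 1] with n hn
    have hnpos : (0:ℝ) < n := by exact_mod_cast hn
    have : Real.log (2*(n:ℕ)) = Real.log 2 + Real.log n := by
      push_cast
      rw [Real.log_mul (by norm_num) (ne_of_gt hnpos)]
    push_cast at this ⊢
    rw [this]
    ring
  have hle : l = Real.log 2 := by
    apply tendsto_nhds_unique h2n
    exact hH.congr fun n => (Sp1_even n).symm
  rwa [hle] at hl'

lemma Sp_est (p : ℕ) {L : ℝ} (hT : Tendsto (Sp p) atTop (𝓝 L)) (m : ℕ) :
    |Sp p m - L| ≤ 1/((m:ℝ)+1)^p :=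
  alt_est (ant p) hT m

/-! ### The integral -/

noncomputable def Fk (k : ℕ) (y : ℝ) : ℝ :=
  (y^4 * Real.sin ((k:ℝ)*y)) / k + (4*y^3 * Real.cos ((k:ℝ)*y)) / (k:ℝ)^2
    - (12*y^2 * Real.sin ((k:ℝ)*y)) / (k:ℝ)^3 - (24*y * Real.cos ((k:ℝ)*y)) / (k:ℝ)^4
    + (24 * Real.sin ((k:ℝ)*y)) / (k:ℝ)^5

lemma hasDerivAt_Fk (k : ℕ) (hk : 1 ≤ k) (y : ℝ) :
    HasDerivAt (Fk k) (y^4 * Real.cos ((k:ℝ)*y)) y := by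
  have hk0 : ((k:ℝ)) ≠ 0 := by positivity
  have hky : HasDerivAt (fun y : ℝ => (k:ℝ)*y) (k:ℝ) y := by
    simpa using (hasDerivAt_id y).const_mul (k:ℝ)
  have hsin := hky.sin
  have hcos := hky.cos
  have h1 := ((hasDerivAt_pow 4 y).mul hsin).div_const (k:ℝ)
  have h2 := (((hasDerivAt_pow 3 y).const_mul (4:ℝ)).mul hcos).div_const ((k:ℝ)^2)
  have h3 := (((hasDerivAt_pow 2 y).const_mul (12:ℝ)).mul hsin).div_const ((k:ℝ)^3)
  have h4 := (((hasDerivAt_id y).const_mul (24:ℝ)).mul hcos).div_const ((k:ℝ)^4)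
  have h5 := (hsin.const_mul (24:ℝ)).div_const ((k:ℝ)^5)
  have H := ((((h1.add h2).sub h3).sub h4).add h5)
  convert H using 1
  · rfl
  · rfl
  · rfl
  norm_num
  field_simp
  ring

lemma integral_pow4_cos (k : ℕ) (hk : 1 ≤ k) :
    ∫ y in (-π)..π, y^4 * Real.cos ((k:ℝ)*y) = 8*π*(-1:ℝ)^k*(π^2*(k:ℝ)^2-6)/(k:ℝ)^4 := by
  have hcont : Continuous fun y : ℝ => y^4 * Real.cos ((k:ℝ)*y) :=
    (continuous_pow 4).mul (Real.continuous_cos.comp (continuous_const.mul continuous_id))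
  rw [intervalIntegral.integral_eq_sub_of_hasDerivAt (fun y _ => hasDerivAt_Fk k hk y)
    (hcont.intervalIntegrable _ _)]
  have hsin : Real.sin ((k:ℝ)*π) = 0 := Real.sin_nat_mul_pi k
  have hcos : Real.cos ((k:ℝ)*π) = (-1:ℝ)^k := by simpa using Real.cos_nat_mul_pi_sub 0 k
  have hsin' : Real.sin ((k:ℝ)*(-π)) = 0 := by rw [mul_neg, Real.sin_neg, hsin, neg_zero]
  have hcos' : Real.cos ((k:ℝ)*(-π)) = (-1:ℝ)^k := by rw [mul_neg, Real.cos_neg, hcos]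
  have hk0 : ((k:ℝ)) ≠ 0 := by positivity
  simp only [Fk, hsin, hcos, hsin', hcos']
  field_simp
  ring

lemma I_eq (m : ℕ) :
    (∫ y in (-π)..π, y^4 * fejerKernel m y)
      = π^4/5 + ∑ k ∈ Icc 1 m,
          (1 - (k:ℝ)/(m+1)) * (8*(-1:ℝ)^k*(π^2*(k:ℝ)^2-6)/(k:ℝ)^4) := by
  have hpi : (π:ℝ) ≠ 0 := Real.pi_ne_zero
  have hfun : (fun y : ℝ => y^4 * fejerKernel m y)
      = fun y : ℝ => (1/(2*π)) * y^4
        + ∑ k ∈ Icc 1 m, ((1/π) * (1 - (k:ℝ)/(m+1))) * (y^4 * Real.cos ((k:ℝ)*y)) := by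
    funext y
    simp only [fejerKernel, Finset.mul_sum, mul_add]
    congr 1
    · ring
    · exact Finset.sum_congr rfl fun k _ => by ring
  rw [hfun]
  have hc1 : IntervalIntegrable (fun y : ℝ => (1/(2*π)) * y^4) MeasureTheory.volume (-π) π :=
    ((continuous_const.mul (continuous_pow 4)).intervalIntegrable _ _)
  have hck : ∀ k ∈ Icc 1 m, IntervalIntegrable
      (fun y : ℝ => ((1/π) * (1 - (k:ℝ)/(m+1))) * (y^4 * Real.cos ((k:ℝ)*y)))
      MeasureTheory.volume (-π) π := fun k _ =>
    ((continuous_const.mul ((continuous_pow 4).mul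
      (Real.continuous_cos.comp (continuous_const.mul continuous_id)))).intervalIntegrable _ _)
  have hc2 : IntervalIntegrable
      (fun y : ℝ => ∑ k ∈ Icc 1 m, ((1/π) * (1 - (k:ℝ)/(m+1))) * (y^4 * Real.cos ((k:ℝ)*y)))
      MeasureTheory.volume (-π) π :=
    (continuous_finset_sum _ fun k _ => continuous_const.mul ((continuous_pow 4).mul
      (Real.continuous_cos.comp (continuous_const.mul continuous_id)))).intervalIntegrable _ _
  rw [intervalIntegral.integral_add hc1 hc2,
    intervalIntegral.integral_finset_sum hck]
  congr 1
  · rw [intervalIntegral.integral_const_mul, integral_pow]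
    have : ((-π:ℝ))^(4+1) = -π^5 := by ring
    rw [this]
    push_cast
    field_simp
    ring
  · refine Finset.sum_congr rfl fun k hk => ?_
    rw [intervalIntegral.integral_const_mul, integral_pow4_cos k (mem_Icc.mp hk).1]
    have hrw : 8*π*(-1:ℝ)^k*(π^2*(k:ℝ)^2-6)/(k:ℝ)^4
        = π * (8*(-1:ℝ)^k*(π^2*(k:ℝ)^2-6)/(k:ℝ)^4) := by ring
    rw [hrw]
    set X := 8*(-1:ℝ)^k*(π^2*(k:ℝ)^2-6)/(k:ℝ)^4 with hX
    field_simp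

/-! ### Decomposition of the sum -/

lemma sum_Icc_eq (g : ℕ → ℝ) (m : ℕ) : ∑ k ∈ Icc 1 m, g k = ∑ i ∈ range m, g (i+1) := by
  induction m with
  | zero => simp
  | succ n ih => rw [Finset.sum_Icc_succ_top (by omega), ih, sum_range_succ]

lemma decomp (m : ℕ) :
    ∑ k ∈ Icc 1 m, (1 - (k:ℝ)/(m+1)) * (8*(-1:ℝ)^k*(π^2*(k:ℝ)^2-6)/(k:ℝ)^4)
      = -8*π^2 * Sp 2 m + 48 * Sp 4 m
        + (8/((m:ℝ)+1)) * (π^2 * Sp 1 m - 6 * Sp 3 m) := by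
  rw [sum_Icc_eq]
  have key : ∀ i ∈ range m,
      (1 - ((i+1:ℕ):ℝ)/(m+1)) * (8*(-1:ℝ)^(i+1)*(π^2*((i+1:ℕ):ℝ)^2-6)/((i+1:ℕ):ℝ)^4)
      = (-8*π^2) * ((-1:ℝ)^i * (1/((i:ℝ)+1)^2)) + 48 * ((-1:ℝ)^i * (1/((i:ℝ)+1)^4))
        + (8/((m:ℝ)+1)) * (π^2 * ((-1:ℝ)^i * (1/((i:ℝ)+1)^1))
            - 6 * ((-1:ℝ)^i * (1/((i:ℝ)+1)^3))) := by
    intro i _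
    have h0 : ((i:ℝ)+1) ≠ 0 := by positivity
    have hm : ((m:ℝ)+1) ≠ 0 := by positivity
    push_cast
    rw [pow_succ]
    field_simp
    ring
  rw [Finset.sum_congr rfl key]
  simp only [Finset.sum_add_distrib, Finset.sum_sub_distrib, ← Finset.mul_sum]
  rw [Sp, Sp, Sp, Sp]

end FejerAux

open FejerAux Filter Topology Real

set_option maxHeartbeats 1600000 in
theorem fejerKernel_fourth_moment :
    ∃ C : ℝ, 0 < C ∧ ∀ m : ℕ, 1 ≤ m →
      |(∫ y in (-Real.pi)..Real.pi, y ^ 4 * fejerKernel m y)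
          - (8 * Real.pi ^ 2 * Real.log 2 - 36 * zeta3) / m|
        ≤ C / (m : ℝ) ^ 2 := by
  set A : ℝ := 8 * Real.pi ^ 2 * Real.log 2 - 36 * zeta3 with hA
  refine ⟨16*π^2 + 97 + |A|, by positivity, fun m hm => ?_⟩
  set M : ℝ := (m : ℝ) with hM
  have hM1 : (1:ℝ) ≤ M := by rw [hM]; exact_mod_cast hm
  have hM0 : (0:ℝ) < M := by linarith
  have hMp1 : (0:ℝ) < M + 1 := by linarith
  set e1 := Sp 1 m - Real.log 2 with he1
  set e2 := Sp 2 m - π^2/12 with he2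
  set e3 := Sp 3 m - 3/4 * zeta3 with he3
  set e4 := Sp 4 m - 7*π^4/720 with he4
  have b1 : |e1| ≤ 1/(M+1)^1 := Sp_est 1 tendsto_Sp1 m
  have b2 : |e2| ≤ 1/(M+1)^2 := Sp_est 2 tendsto_Sp2 m
  have b3 : |e3| ≤ 1/(M+1)^3 := Sp_est 3 tendsto_Sp3 m
  have b4 : |e4| ≤ 1/(M+1)^4 := Sp_est 4 tendsto_Sp4 m
  have hS1 : Sp 1 m = Real.log 2 + e1 := by rw [he1]; ring
  have hS2 : Sp 2 m = π^2/12 + e2 := by rw [he2]; ring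
  have hS3 : Sp 3 m = 3/4 * zeta3 + e3 := by rw [he3]; ring
  have hS4 : Sp 4 m = 7*π^4/720 + e4 := by rw [he4]; ring
  have key : (∫ y in (-Real.pi)..Real.pi, y ^ 4 * fejerKernel m y) - A / M
      = -8*π^2*e2 + 48*e4 + (8/(M+1))*(π^2*e1 - 6*e3) - A/(M*(M+1)) := by
    rw [I_eq, decomp, hS1, hS2, hS3, hS4, hA]
    have hM0' : M ≠ 0 := ne_of_gt hM0
    have hM1' : M + 1 ≠ 0 := ne_of_gt hMp1
    field_simp
    ring
  rw [key]
  -- triangle inequality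
  have tri : |(-8*π^2*e2) + 48*e4 + (8/(M+1))*(π^2*e1 - 6*e3) - A/(M*(M+1))|
      ≤ |(-8*π^2*e2)| + |48*e4| + |(8/(M+1))*(π^2*e1 - 6*e3)| + |A/(M*(M+1))| := by
    calc |(-8*π^2*e2) + 48*e4 + (8/(M+1))*(π^2*e1 - 6*e3) - A/(M*(M+1))|
        ≤ |(-8*π^2*e2) + 48*e4 + (8/(M+1))*(π^2*e1 - 6*e3)| + |A/(M*(M+1))| :=
          abs_sub _ _
      _ ≤ |(-8*π^2*e2) + 48*e4| + |(8/(M+1))*(π^2*e1 - 6*e3)| + |A/(M*(M+1))| := by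
          gcongr
          exact abs_add_le _ _
      _ ≤ |(-8*π^2*e2)| + |48*e4| + |(8/(M+1))*(π^2*e1 - 6*e3)| + |A/(M*(M+1))| := by
          gcongr
          exact abs_add_le _ _
  have m1 : |(-8*π^2*e2)| = 8*π^2*|e2| := by
    rw [abs_mul]
    congr 1
    rw [show ((-8)*π^2:ℝ) = -(8*π^2) by ring, abs_neg, abs_of_nonneg (by positivity)]
  have m2 : |(48:ℝ)*e4| = 48*|e4| := by
    rw [abs_mul, abs_of_nonneg (by norm_num : (48:ℝ) ≥ 0)]
  have m3 : |(8/(M+1))*(π^2*e1 - 6*e3)| ≤ (8/(M+1))*(π^2*|e1| + 6*|e3|) := by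
    rw [abs_mul, abs_of_nonneg (by positivity : (0:ℝ) ≤ 8/(M+1))]
    gcongr
    calc |π^2*e1 - 6*e3| ≤ |π^2*e1| + |6*e3| := abs_sub _ _
      _ = π^2*|e1| + 6*|e3| := by
          rw [abs_mul, abs_mul, abs_of_nonneg (by positivity : (0:ℝ) ≤ π^2),
            abs_of_nonneg (by norm_num : (0:ℝ) ≤ (6:ℝ))]
  have m4 : |A/(M*(M+1))| = |A|/(M*(M+1)) := by
    rw [abs_div, abs_of_nonneg (by positivity : (0:ℝ) ≤ M*(M+1))]
  -- bound each piece by something over M^2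
  have inv2 : (1:ℝ)/(M+1)^2 ≤ 1/M^2 := by
    apply one_div_le_one_div_of_le (by positivity)
    nlinarith
  have inv4 : (1:ℝ)/(M+1)^4 ≤ 1/M^2 := by
    apply one_div_le_one_div_of_le (by positivity)
    nlinarith
  have inv3a : (1:ℝ)/(M+1)^3 ≤ 1/(M+1) := by
    apply one_div_le_one_div_of_le (by positivity)
    nlinarith
  have q2 : 8*π^2*|e2| ≤ 8*π^2*(1/M^2) :=
    mul_le_mul_of_nonneg_left (b2.trans inv2) (by positivity)
  have q4 : 48*|e4| ≤ 48*(1/M^2) :=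
    mul_le_mul_of_nonneg_left (b4.trans inv4) (by norm_num)
  have q3 : (8/(M+1))*(π^2*|e1| + 6*|e3|) ≤ (8*(π^2+6))*(1/M^2) := by
    have b1' : |e1| ≤ 1/(M+1) := by
      have := b1; rwa [pow_one] at this
    have b3' : |e3| ≤ 1/(M+1) := b3.trans inv3a
    have hin : π^2*|e1| + 6*|e3| ≤ (π^2+6)*(1/(M+1)) := by
      have u1 : π^2*|e1| ≤ π^2*(1/(M+1)) := mul_le_mul_of_nonneg_left b1' (by positivity)
      have u3 : 6*|e3| ≤ 6*(1/(M+1)) := mul_le_mul_of_nonneg_left b3' (by norm_num)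
      nlinarith
    have step1 : (8/(M+1))*(π^2*|e1| + 6*|e3|) ≤ (8/(M+1))*((π^2+6)*(1/(M+1))) :=
      mul_le_mul_of_nonneg_left hin (by positivity)
    have step2 : (8/(M+1))*((π^2+6)*(1/(M+1))) = (8*(π^2+6))*(1/(M+1)^2) := by
      field_simp
    have step3 : (8*(π^2+6))*(1/(M+1)^2) ≤ (8*(π^2+6))*(1/M^2) :=
      mul_le_mul_of_nonneg_left inv2 (by positivity)
    calc (8/(M+1))*(π^2*|e1| + 6*|e3|) ≤ (8/(M+1))*((π^2+6)*(1/(M+1))) := step1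
      _ = (8*(π^2+6))*(1/(M+1)^2) := step2
      _ ≤ (8*(π^2+6))*(1/M^2) := step3
  have q5 : |A|/(M*(M+1)) ≤ |A|/M^2 := by
    apply div_le_div_of_nonneg_left (abs_nonneg A) (by positivity)
    nlinarith
  calc |(-8*π^2*e2) + 48*e4 + (8/(M+1))*(π^2*e1 - 6*e3) - A/(M*(M+1))|
      ≤ |(-8*π^2*e2)| + |48*e4| + |(8/(M+1))*(π^2*e1 - 6*e3)| + |A/(M*(M+1))| := tri
    _ ≤ 8*π^2*(1/M^2) + 48*(1/M^2) + (8*(π^2+6))*(1/M^2) + |A|/M^2 := by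
        rw [m1, m2, m4]
        exact add_le_add (add_le_add (add_le_add q2 q4) (m3.trans q3)) q5
    _ = (16*π^2 + 96 + |A|)/M^2 := by ring
    _ ≤ (16*π^2 + 97 + |A|)/M^2 := by
        gcongr
        linarith
end

section
/- Let \(\gamma_m(\theta) = \sum_{k=1}^m (-1)^k (1 - \frac{k}{m+1})^2 \frac{\sin(k\theta)}{k}\). Then for each fixed \(\theta \in (-\pi, \pi)\), \(\gamma_m(\theta) = -\frac{\theta}{2} + O(m^{-1})\) as \(m\to\infty\); consequently \(\gamma_{1,m}(\theta) := \theta + 2\gamma_m(\theta) = O(m^{-1})\). -/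
open Finset

noncomputable def gammaM (m : ℕ) (θ : ℝ) : ℝ :=
  ∑ k ∈ Finset.Icc 1 m, (-1 : ℝ) ^ k * (1 - (k : ℝ) / (m + 1)) ^ 2 * Real.sin (k * θ) / k

open Complex Filter Topology

noncomputable def aa (θ : ℝ) (k : ℕ) : ℝ := (-1)^k * Real.sin (k*θ)

lemma key_ident (θ : ℝ) :
    1 + Complex.exp (θ * I) = (2 * Real.cos (θ/2) : ℝ) * Complex.exp ((θ/2 : ℝ) * I) := by
  have h2 : ((2 * Real.cos (θ/2) : ℝ) : ℂ) = 2 * Complex.cos ((θ/2 : ℝ) : ℂ) := by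
    push_cast [Complex.ofReal_cos]; ring
  rw [h2]
  have hc : 2 * Complex.cos ((θ/2 : ℝ) : ℂ) =
      Complex.exp (((θ/2:ℝ):ℂ) * I) + Complex.exp (-(((θ/2:ℝ):ℂ)) * I) := by
    rw [Complex.cos]; ring_nf
  rw [mul_comm (2 * Complex.cos ((θ/2 : ℝ) : ℂ)), hc, mul_add, ← Complex.exp_add,
    ← Complex.exp_add]
  have e1 : ((θ/2:ℝ):ℂ) * I + ((θ/2:ℝ):ℂ) * I = (θ:ℂ) * I := by push_cast; ring
  have e2 : ((θ/2:ℝ):ℂ) * I + -(((θ/2:ℝ):ℂ)) * I = 0 := by ring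
  rw [e1, e2, Complex.exp_zero, add_comm]

lemma cos_half_pos {θ : ℝ} (hθ : θ ∈ Set.Ioo (-Real.pi) Real.pi) : 0 < Real.cos (θ/2) := by
  apply Real.cos_pos_of_mem_Ioo
  constructor
  · simp only [Set.mem_Ioo] at hθ; linarith [hθ.1]
  · simp only [Set.mem_Ioo] at hθ; linarith [hθ.2]

lemma abs_one_add_exp {θ : ℝ} (hθ : θ ∈ Set.Ioo (-Real.pi) Real.pi) :
    ‖1 + Complex.exp (θ * I)‖ = 2 * Real.cos (θ/2) := by
  rw [key_ident, norm_mul, Complex.norm_exp_ofReal_mul_I, mul_one, Complex.norm_real, Real.norm_eq_abs,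
    _root_.abs_of_pos (by linarith [cos_half_pos hθ])]

lemma partial_sum_bound {θ : ℝ} (hθ : θ ∈ Set.Ioo (-Real.pi) Real.pi) (n : ℕ) :
    |∑ i ∈ range n, aa θ i| ≤ 1 / Real.cos (θ/2) := by
  set w : ℂ := -Complex.exp (θ * I) with hw
  have hne : w ≠ 1 := by
    intro h
    have : ‖1 + Complex.exp (θ * I)‖ = 0 := by
      rw [show (1 : ℂ) + Complex.exp (θ*I) = 1 - w by rw [hw]; ring, h]; simp
    rw [abs_one_add_exp hθ] at this
    linarith [cos_half_pos hθ]
  have him : ∀ i : ℕ, aa θ i = (w ^ i).im := by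
    intro i
    have hwi : w^i = ((-1:ℝ)^i : ℂ) * Complex.exp ((i*θ:ℝ)*I) := by
      rw [hw, neg_pow, ← Complex.exp_nat_mul]; norm_cast; push_cast; ring_nf
    rw [hwi, ← Complex.ofReal_pow, Complex.im_ofReal_mul, Complex.exp_ofReal_mul_I_im, aa]
  have hsum : ∑ i ∈ range n, aa θ i = (∑ i ∈ range n, w ^ i).im := by
    rw [Complex.im_sum]; exact Finset.sum_congr rfl (fun i _ => him i)
  rw [hsum, geom_sum_eq hne]
  have habsw : ‖w^n‖ = 1 := by
    rw [norm_pow, hw, norm_neg, Complex.norm_exp_ofReal_mul_I, one_pow]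
  calc |((w^n - 1)/(w-1)).im| ≤ ‖(w^n - 1)/(w-1)‖ := Complex.abs_im_le_norm _
    _ ≤ 2 / (2 * Real.cos (θ/2)) := by
        have hden : ‖w - 1‖ = 2 * Real.cos (θ/2) := by
          rw [show w - 1 = -(1 + Complex.exp (θ*I)) by rw [hw]; ring, norm_neg,
            abs_one_add_exp hθ]
        have hc2 : (0:ℝ) < 2 * Real.cos (θ/2) := by linarith [cos_half_pos hθ]
        rw [norm_div, hden]
        have hnum : ‖w^n - 1‖ ≤ 2 := by
          calc ‖w^n - 1‖ ≤ ‖w^n‖ + ‖(1:ℂ)‖ :=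
                norm_sub_le _ _
            _ ≤ 2 := by rw [habsw, norm_one]; norm_num
        exact div_le_div_of_nonneg_right hnum hc2.le |>.trans_eq rfl
    _ = 1 / Real.cos (θ/2) := by
        have := cos_half_pos hθ
        rw [div_eq_div_iff (by linarith) (by linarith)]; ring


lemma telescope_inv {m n : ℕ} (hmn : m + 1 ≤ n) :
    ∑ i ∈ Ioc m (n-1), (((i:ℝ))⁻¹ - ((i+1:ℕ):ℝ)⁻¹) = ((m+1:ℕ):ℝ)⁻¹ - ((n:ℕ):ℝ)⁻¹ := by
  have h1 : Ioc m (n-1) = Ico (m+1) n := by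
    ext x
    simp only [Finset.mem_Ioc, Finset.mem_Ico]
    omega
  rw [h1, Finset.sum_Ico_eq_sub _ hmn]
  rw [Finset.sum_range_sub' (fun i => ((i:ℕ):ℝ)⁻¹), Finset.sum_range_sub' (fun i => ((i:ℕ):ℝ)⁻¹)]
  ring

lemma tail_bound {a : ℕ → ℝ} {B : ℝ} (hB : ∀ n, |∑ i ∈ range n, a i| ≤ B)
    {m n : ℕ} (hm : 1 ≤ m) (hmn : m < n) :
    |∑ k ∈ Ioc m n, a k / k| ≤ 2 * B / (m+1) := by
  have hB0 : 0 ≤ B := le_trans (abs_nonneg _) (hB 0)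
  have hsbp := Finset.sum_Ioc_by_parts (fun i => ((i:ℝ))⁻¹) a hmn
  simp only [smul_eq_mul] at hsbp
  have heq : ∑ k ∈ Ioc m n, a k / k = ∑ k ∈ Ioc m n, ((k:ℝ))⁻¹ * a k := by
    refine Finset.sum_congr rfl fun k _ => ?_
    rw [div_eq_inv_mul]
  rw [heq, hsbp]
  have hmm : (0:ℝ) < (m:ℝ) + 1 := by positivity
  have hnn : (0:ℝ) < (n:ℝ) := by
    have : 0 < n := lt_of_le_of_lt (Nat.zero_le m) hmn
    exact_mod_cast this
  have bnd3 : |∑ i ∈ Ioc m (n-1), ((((i+1:ℕ)):ℝ)⁻¹ - ((i:ℝ))⁻¹) * ∑ j ∈ range (i+1), a j|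
      ≤ B * (((m+1:ℕ):ℝ)⁻¹ - ((n:ℕ):ℝ)⁻¹) := by
    calc |∑ i ∈ Ioc m (n-1), ((((i+1:ℕ)):ℝ)⁻¹ - ((i:ℝ))⁻¹) * ∑ j ∈ range (i+1), a j|
        ≤ ∑ i ∈ Ioc m (n-1), |((((i+1:ℕ)):ℝ)⁻¹ - ((i:ℝ))⁻¹) * ∑ j ∈ range (i+1), a j| :=
          Finset.abs_sum_le_sum_abs _ _
      _ ≤ ∑ i ∈ Ioc m (n-1), (((i:ℝ))⁻¹ - (((i+1:ℕ)):ℝ)⁻¹) * B := by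
          refine Finset.sum_le_sum fun i hi => ?_
          rw [abs_mul]
          have hi1 : m < i := (Finset.mem_Ioc.mp hi).1
          have hipos : (0:ℝ) < (i:ℝ) := by
            have : 0 < i := lt_of_le_of_lt (Nat.zero_le m) hi1
            exact_mod_cast this
          have hmono : (((i+1:ℕ)):ℝ)⁻¹ ≤ ((i:ℝ))⁻¹ := by
            apply inv_anti₀ hipos
            push_cast; linarith
          rw [abs_sub_comm, _root_.abs_of_nonneg (by linarith)]
          exact mul_le_mul_of_nonneg_left (hB _) (by linarith)
      _ = B * (((m+1:ℕ):ℝ)⁻¹ - ((n:ℕ):ℝ)⁻¹) := by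
          rw [← Finset.sum_mul, telescope_inv hmn, mul_comm]
  calc |((n:ℝ))⁻¹ * ∑ i ∈ range (n+1), a i - ((m+1:ℕ):ℝ)⁻¹ * ∑ i ∈ range (m+1), a i
        - ∑ i ∈ Ioc m (n-1), ((((i+1:ℕ)):ℝ)⁻¹ - ((i:ℝ))⁻¹) * ∑ j ∈ range (i+1), a j|
      ≤ |((n:ℝ))⁻¹ * ∑ i ∈ range (n+1), a i| + |((m+1:ℕ):ℝ)⁻¹ * ∑ i ∈ range (m+1), a i|
        + |∑ i ∈ Ioc m (n-1), ((((i+1:ℕ)):ℝ)⁻¹ - ((i:ℝ))⁻¹) * ∑ j ∈ range (i+1), a j| := by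
        calc |((n:ℝ))⁻¹ * ∑ i ∈ range (n+1), a i - ((m+1:ℕ):ℝ)⁻¹ * ∑ i ∈ range (m+1), a i
            - ∑ i ∈ Ioc m (n-1), ((((i+1:ℕ)):ℝ)⁻¹ - ((i:ℝ))⁻¹) * ∑ j ∈ range (i+1), a j|
            ≤ |((n:ℝ))⁻¹ * ∑ i ∈ range (n+1), a i - ((m+1:ℕ):ℝ)⁻¹ * ∑ i ∈ range (m+1), a i|
              + |∑ i ∈ Ioc m (n-1), ((((i+1:ℕ)):ℝ)⁻¹ - ((i:ℝ))⁻¹) * ∑ j ∈ range (i+1), a j| :=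
              abs_sub _ _
          _ ≤ _ := by gcongr; exact abs_sub _ _
    _ ≤ ((n:ℝ))⁻¹ * B + ((m+1:ℕ):ℝ)⁻¹ * B + B * (((m+1:ℕ):ℝ)⁻¹ - ((n:ℕ):ℝ)⁻¹) := by
        have b1 : |((n:ℝ))⁻¹ * ∑ i ∈ range (n+1), a i| ≤ ((n:ℝ))⁻¹ * B := by
          rw [abs_mul, _root_.abs_of_nonneg (by positivity)]
          exact mul_le_mul_of_nonneg_left (hB _) (by positivity)
        have b2 : |((m+1:ℕ):ℝ)⁻¹ * ∑ i ∈ range (m+1), a i| ≤ ((m+1:ℕ):ℝ)⁻¹ * B := by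
          rw [abs_mul, _root_.abs_of_nonneg (by positivity)]
          exact mul_le_mul_of_nonneg_left (hB _) (by positivity)
        exact add_le_add (add_le_add b1 b2) bnd3
    _ = 2 * B / (m+1) := by push_cast; field_simp; ring


lemma weighted_bound {a : ℕ → ℝ} {B : ℝ} (hB : ∀ n, |∑ i ∈ range n, a i| ≤ B)
    {m : ℕ} (hm : 1 ≤ m) :
    |∑ k ∈ Ioc 0 m, (k:ℝ) * a k| ≤ 2 * m * B := by
  have hB0 : 0 ≤ B := le_trans (abs_nonneg _) (hB 0)
  have hsbp := Finset.sum_Ioc_by_parts (fun i => ((i:ℕ):ℝ)) a (show 0 < m from hm)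
  simp only [smul_eq_mul] at hsbp
  rw [hsbp]
  have hm1 : (1:ℝ) ≤ (m:ℝ) := by exact_mod_cast hm
  have bnd3 : |∑ i ∈ Ioc 0 (m-1), (((i+1:ℕ):ℝ) - ((i:ℕ):ℝ)) * ∑ j ∈ range (i+1), a j|
      ≤ ((m:ℝ) - 1) * B := by
    calc |∑ i ∈ Ioc 0 (m-1), (((i+1:ℕ):ℝ) - ((i:ℕ):ℝ)) * ∑ j ∈ range (i+1), a j|
        ≤ ∑ i ∈ Ioc 0 (m-1), |(((i+1:ℕ):ℝ) - ((i:ℕ):ℝ)) * ∑ j ∈ range (i+1), a j| :=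
          Finset.abs_sum_le_sum_abs _ _
      _ ≤ ∑ _i ∈ Ioc 0 (m-1), B := by
          refine Finset.sum_le_sum fun i _ => ?_
          have h1 : (((i+1:ℕ):ℝ) - ((i:ℕ):ℝ)) = 1 := by push_cast; ring
          rw [abs_mul, h1, abs_one, one_mul]
          exact hB _
      _ = ((m:ℝ) - 1) * B := by
          rw [Finset.sum_const, Nat.card_Ioc, nsmul_eq_mul]
          congr 1
          have : m - 1 - 0 = m - 1 := by omega
          rw [this, Nat.cast_sub hm]
          push_cast; ring
  calc |(m:ℝ) * ∑ i ∈ range (m+1), a i - ((0+1:ℕ):ℝ) * ∑ i ∈ range (0+1), a i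
        - ∑ i ∈ Ioc 0 (m-1), (((i+1:ℕ):ℝ) - ((i:ℕ):ℝ)) * ∑ j ∈ range (i+1), a j|
      ≤ |(m:ℝ) * ∑ i ∈ range (m+1), a i - ((0+1:ℕ):ℝ) * ∑ i ∈ range (0+1), a i|
        + |∑ i ∈ Ioc 0 (m-1), (((i+1:ℕ):ℝ) - ((i:ℕ):ℝ)) * ∑ j ∈ range (i+1), a j| :=
        abs_sub _ _
    _ ≤ (|(m:ℝ) * ∑ i ∈ range (m+1), a i| + |((0+1:ℕ):ℝ) * ∑ i ∈ range (0+1), a i|)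
        + ((m:ℝ) - 1) * B := add_le_add (abs_sub _ _) bnd3
    _ ≤ ((m:ℝ) * B + 1 * B) + ((m:ℝ) - 1) * B := by
        refine add_le_add (add_le_add ?_ ?_) le_rfl
        · rw [abs_mul, _root_.abs_of_nonneg (by positivity)]
          exact mul_le_mul_of_nonneg_left (hB _) (by positivity)
        · rw [abs_mul, _root_.abs_of_nonneg (by norm_num)]
          simpa using hB 1
    _ = 2 * m * B := by ring

lemma arg_one_add_exp {θ : ℝ} (hθ : θ ∈ Set.Ioo (-Real.pi) Real.pi) :
    Complex.arg (1 + Complex.exp (θ * I)) = θ / 2 := by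
  rw [key_ident θ]
  rw [Complex.arg_real_mul _ (by linarith [cos_half_pos hθ]), Complex.exp_mul_I]
  apply Complex.arg_cos_add_sin_mul_I
  obtain ⟨h1, h2⟩ := hθ
  constructor
  · linarith
  · linarith [Real.pi_pos]

lemma aux_pow (θ : ℝ) (x : ℝ) (n : ℕ) :
    (-(x:ℂ) * Complex.exp (θ * I)) ^ n / n
      = (((-x)^n / n : ℝ) : ℂ) * Complex.exp (((n * θ : ℝ) : ℂ) * I) := by
  rw [mul_pow, ← Complex.exp_nat_mul]
  have h1 : (-(x:ℂ))^n = (((-x)^n : ℝ) : ℂ) := by push_cast; ring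
  rw [h1]
  rw [Complex.ofReal_div]
  push_cast
  ring

lemma sum_tendsto {θ : ℝ} (hθ : θ ∈ Set.Ioo (-Real.pi) Real.pi) :
    Tendsto (fun n => ∑ i ∈ range n, aa θ i / i) atTop (𝓝 (-θ/2)) := by
  set B : ℝ := 1 / Real.cos (θ/2) with hBdef
  have hB : ∀ n, |∑ i ∈ range n, aa θ i| ≤ B := partial_sum_bound hθ
  have hB0 : 0 ≤ B := le_trans (abs_nonneg _) (hB 0)
  set s : ℕ → ℝ := fun n => ∑ i ∈ range n, aa θ i / i with hs
  have hdiff : ∀ m n : ℕ, m ≤ n → s (n+1) - s (m+1) = ∑ k ∈ Ioc m n, aa θ k / k := by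
    intro m n hmn
    rw [hs]
    simp only
    rw [← Finset.sum_Ico_eq_sub _ (by omega : m + 1 ≤ n + 1)]
    congr 1
    rw [Finset.Ico_add_one_right_eq_Icc, Finset.Icc_add_one_left_eq_Ioc]
  have htail : ∀ m n : ℕ, 1 ≤ m → m ≤ n → |s (n+1) - s (m+1)| ≤ 2 * B / (m+1) := by
    intro m n hm hmn
    rcases eq_or_lt_of_le hmn with rfl | hlt
    · simp only [sub_self, abs_zero]; positivity
    · rw [hdiff m n hmn]; exact tail_bound hB hm hlt
  have hcauchy : CauchySeq s := by
    rw [Metric.cauchySeq_iff']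
    intro ε hε
    obtain ⟨m, hm⟩ := exists_nat_gt (2 * B / ε)
    refine ⟨m + 2, fun n hn => ?_⟩
    obtain ⟨n', rfl⟩ : ∃ n', n = n' + 1 := ⟨n - 1, by omega⟩
    have h1 : |s (n'+1) - s (m+1+1)| ≤ 2 * B / (m+1+1) := by
      rcases le_or_gt (m+1) n' with h | h
      · have := htail (m+1) n' (by omega) h
        push_cast at this ⊢
        convert this using 3 <;> push_cast <;> ring
      · exfalso; omega
    rw [Real.dist_eq]
    calc |s (n'+1) - s (m+1+1)| ≤ 2 * B / (m+1+1) := h1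
      _ < ε := by
          rw [div_lt_iff₀ (by positivity)]
          rw [div_lt_iff₀ hε] at hm
          have hm' : 2 * B < m * ε := hm
          nlinarith
  obtain ⟨l, hl⟩ := cauchySeq_tendsto_of_complete hcauchy
  have abel := Real.tendsto_tsum_powerSeries_nhdsWithin_lt hl
  -- the limit function
  have hcont : Tendsto (fun x : ℝ => (-(Complex.log (1 + (x:ℂ) * Complex.exp (θ * I)))).im)
      (𝓝[<] (1:ℝ)) (𝓝 (-θ/2)) := by
    have hg : Continuous (fun x : ℝ => 1 + (x:ℂ) * Complex.exp (θ * I)) := by continuity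
    have hre : (0:ℝ) < (1 + Complex.exp (θ * I)).re := by
      rw [Complex.add_re, Complex.one_re, Complex.exp_ofReal_mul_I_re]
      have h2 := Real.cos_sq (θ/2)
      have h3 := cos_half_pos hθ
      have h4 : (2:ℝ) * (θ/2) = θ := by ring
      rw [h4] at h2
      nlinarith
    have hslit : 1 + Complex.exp (θ * I) ∈ Complex.slitPlane :=
      Complex.mem_slitPlane_iff.mpr (Or.inl hre)
    have hlog : ContinuousAt (fun x : ℝ => Complex.log (1 + (x:ℂ) * Complex.exp (θ * I))) 1 := by
      have hg1 : ContinuousAt Complex.log ((fun x : ℝ => 1 + (x:ℂ) * Complex.exp (θ * I)) 1) := by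
        apply continuousAt_clog
        simpa using hslit
      exact ContinuousAt.comp (f := fun x : ℝ => 1 + (x:ℂ) * Complex.exp (θ * I))
        (g := Complex.log) hg1 hg.continuousAt
    have hC : ContinuousAt (fun x : ℝ => (-(Complex.log (1 + (x:ℂ) * Complex.exp (θ * I)))).im) 1 :=
      (Complex.continuous_im.continuousAt.comp hlog.neg)
    have hval : (-(Complex.log (1 + ((1:ℝ):ℂ) * Complex.exp (θ * I)))).im = -θ/2 := by
      rw [Complex.neg_im, show ((1:ℝ):ℂ) * Complex.exp (θ * I) = Complex.exp (θ * I) by simp,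
        Complex.log_im, arg_one_add_exp hθ]
      ring
    have := hC.tendsto
    rw [hval] at this
    exact this.mono_left nhdsWithin_le_nhds
  -- the power series equals that function on (-1,1)
  have habel' : Tendsto (fun x : ℝ => (-(Complex.log (1 + (x:ℂ) * Complex.exp (θ * I)))).im)
      (𝓝[<] (1:ℝ)) (𝓝 l) := by
    apply abel.congr'
    rw [eventuallyEq_nhdsWithin_iff, Metric.eventually_nhds_iff]
    refine ⟨1, zero_lt_one, fun y hy1 hy2 => ?_⟩
    rw [Real.dist_eq, abs_sub_lt_iff] at hy1
    rw [Set.mem_Iio] at hy2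
    have hy : |y| < 1 := by rw [abs_lt]; constructor <;> linarith
    have hz : ‖(-(y:ℂ) * Complex.exp (θ * I))‖ < 1 := by
      rw [norm_mul, norm_neg, Complex.norm_exp_ofReal_mul_I, Complex.norm_real, Real.norm_eq_abs,
        mul_one]
      exact hy
    have hsum := Complex.hasSum_taylorSeries_neg_log hz
    have h1z : 1 - (-(y:ℂ) * Complex.exp (θ * I)) = 1 + (y:ℂ) * Complex.exp (θ * I) := by ring
    rw [h1z] at hsum
    have hsumim : HasSum (fun n : ℕ => aa θ n / n * y ^ n)
        ((-(Complex.log (1 + (y:ℂ) * Complex.exp (θ * I)))).im) := by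
      have := ((Complex.hasSum_iff _ _).mp hsum).2
      refine this.congr_fun fun n => ?_
      rw [aux_pow, Complex.im_ofReal_mul, Complex.exp_ofReal_mul_I_im, aa]
      rcases Nat.eq_zero_or_pos n with rfl | hn
      · simp
      · rw [neg_pow]
        push_cast
        field_simp
        ring
    exact hsumim.tsum_eq
  have : l = -θ/2 := tendsto_nhds_unique habel' hcont
  rwa [this] at hl

lemma sum_Ioc_eq_s {θ : ℝ} (m : ℕ) :
    ∑ k ∈ Ioc 0 m, aa θ k / k = ∑ i ∈ range (m+1), aa θ i / i := by
  have h0 : aa θ 0 / (0:ℕ) = 0 := by simp [aa]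
  rw [Finset.range_eq_Ico, Finset.sum_eq_sum_Ico_succ_bot (by omega : 0 < m+1), h0, zero_add]
  congr 1

lemma s_close {θ : ℝ} (hθ : θ ∈ Set.Ioo (-Real.pi) Real.pi) {m : ℕ} (hm : 1 ≤ m) :
    |(∑ k ∈ Ioc 0 m, aa θ k / k) + θ/2| ≤ 2 * (1 / Real.cos (θ/2)) / ((m:ℝ)+1) := by
  set B : ℝ := 1 / Real.cos (θ/2) with hBdef
  have hB : ∀ n, |∑ i ∈ range n, aa θ i| ≤ B := partial_sum_bound hθ
  have hB0 : 0 ≤ B := le_trans (abs_nonneg _) (hB 0)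
  set s : ℕ → ℝ := fun n => ∑ i ∈ range n, aa θ i / i with hs
  have hdiff : ∀ p n : ℕ, p ≤ n → s (n+1) - s (p+1) = ∑ k ∈ Ioc p n, aa θ k / k := by
    intro p n hpn
    rw [hs]
    simp only
    rw [← Finset.sum_Ico_eq_sub _ (by omega : p + 1 ≤ n + 1)]
    congr 1
    rw [Finset.Ico_add_one_right_eq_Icc, Finset.Icc_add_one_left_eq_Ioc]
  have htail : ∀ n, m ≤ n → |s (n+1) - s (m+1)| ≤ 2 * B / ((m:ℝ)+1) := by
    intro n hmn
    rcases eq_or_lt_of_le hmn with rfl | hlt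
    · simp only [sub_self, abs_zero]; positivity
    · rw [hdiff m n hmn]
      have := tail_bound hB hm hlt
      push_cast at this ⊢
      exact this
  have hlim := sum_tendsto hθ
  have h2 : Tendsto (fun n => |s (n+1) - s (m+1)|) atTop (𝓝 |(-θ/2) - s (m+1)|) := by
    have hcomp : Tendsto (fun n => s (n+1)) atTop (𝓝 (-θ/2)) :=
      hlim.comp (tendsto_add_atTop_nat 1)
    exact (hcomp.sub_const (s (m+1))).abs
  have h3 : |(-θ/2) - s (m+1)| ≤ 2 * B / ((m:ℝ)+1) :=
    le_of_tendsto h2 (Filter.eventually_atTop.mpr ⟨m, htail⟩)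
  have heq : (∑ k ∈ Ioc 0 m, aa θ k / k) + θ/2 = -((-θ/2) - s (m+1)) := by
    rw [hs]
    simp only
    rw [sum_Ioc_eq_s]
    ring
  rw [heq, abs_neg]
  exact h3

theorem gammaM_asymp (θ : ℝ) (hθ : θ ∈ Set.Ioo (-Real.pi) Real.pi) :
    (∃ C : ℝ, 0 < C ∧ ∀ m : ℕ, 1 ≤ m →
      |gammaM m θ + θ / 2| ≤ C / m) ∧
    (∃ C : ℝ, 0 < C ∧ ∀ m : ℕ, 1 ≤ m →
      |θ + 2 * gammaM m θ| ≤ C / m) := by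
  set B : ℝ := 1 / Real.cos (θ/2) with hBdef
  have hcpos := cos_half_pos hθ
  have hBpos : 0 < B := by positivity
  have hB : ∀ n, |∑ i ∈ range n, aa θ i| ≤ B := partial_sum_bound hθ
  have main : ∀ m : ℕ, 1 ≤ m → |gammaM m θ + θ/2| ≤ 6 * B / m := by
    intro m hm
    have hm1 : (1:ℝ) ≤ (m:ℝ) := by exact_mod_cast hm
    have hmp : (0:ℝ) < (m:ℝ) := by linarith
    have hmp1 : (0:ℝ) < (m:ℝ)+1 := by linarith
    have hIoc : Icc 1 m = Ioc 0 m := Finset.Icc_add_one_left_eq_Ioc 0 m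
    have hdecomp : gammaM m θ = (∑ k ∈ Icc 1 m, aa θ k / k)
        - (2/((m:ℝ)+1)) * (∑ k ∈ Icc 1 m, aa θ k)
        + (1/((m:ℝ)+1)^2) * (∑ k ∈ Icc 1 m, (k:ℝ) * aa θ k) := by
      rw [gammaM, Finset.mul_sum, Finset.mul_sum, ← Finset.sum_sub_distrib,
        ← Finset.sum_add_distrib]
      refine Finset.sum_congr rfl fun k hk => ?_
      have hk1 : 1 ≤ k := (Finset.mem_Icc.mp hk).1
      have hkpos : (0:ℝ) < (k:ℝ) := by exact_mod_cast hk1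
      rw [aa]
      field_simp
      ring
    have ht1 : |(∑ k ∈ Icc 1 m, aa θ k / k) + θ/2| ≤ 2*B/((m:ℝ)+1) := by
      rw [hIoc]; exact s_close hθ hm
    have ht2 : |∑ k ∈ Icc 1 m, aa θ k| ≤ B := by
      have h0 : aa θ 0 = 0 := by simp [aa]
      have heq : ∑ k ∈ Icc 1 m, aa θ k = ∑ i ∈ range (m+1), aa θ i := by
        rw [Finset.range_eq_Ico, Finset.sum_eq_sum_Ico_succ_bot (by omega : 0 < m+1), h0,
          zero_add]
        congr 1
      rw [heq]; exact hB _
    have ht3 : |∑ k ∈ Icc 1 m, (k:ℝ) * aa θ k| ≤ 2*(m:ℝ)*B := by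
      rw [hIoc]; exact weighted_bound hB hm
    have habs : |gammaM m θ + θ/2|
        ≤ |(∑ k ∈ Icc 1 m, aa θ k / k) + θ/2|
          + |(2/((m:ℝ)+1)) * (∑ k ∈ Icc 1 m, aa θ k)|
          + |(1/((m:ℝ)+1)^2) * (∑ k ∈ Icc 1 m, (k:ℝ) * aa θ k)| := by
      rw [hdecomp]
      have : (∑ k ∈ Icc 1 m, aa θ k / k)
          - (2/((m:ℝ)+1)) * (∑ k ∈ Icc 1 m, aa θ k)
          + (1/((m:ℝ)+1)^2) * (∑ k ∈ Icc 1 m, (k:ℝ) * aa θ k) + θ/2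
          = ((∑ k ∈ Icc 1 m, aa θ k / k) + θ/2)
            + (-((2/((m:ℝ)+1)) * (∑ k ∈ Icc 1 m, aa θ k)))
            + ((1/((m:ℝ)+1)^2) * (∑ k ∈ Icc 1 m, (k:ℝ) * aa θ k)) := by ring
      rw [this]
      calc _ ≤ _ := abs_add_three _ _ _
        _ = _ := by rw [abs_neg]
    have hb2 : |(2/((m:ℝ)+1)) * (∑ k ∈ Icc 1 m, aa θ k)| ≤ 2*B/((m:ℝ)+1) := by
      rw [abs_mul, _root_.abs_of_nonneg (by positivity)]
      calc 2/((m:ℝ)+1) * |∑ k ∈ Icc 1 m, aa θ k| ≤ 2/((m:ℝ)+1) * B := by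
            exact mul_le_mul_of_nonneg_left ht2 (by positivity)
        _ = 2*B/((m:ℝ)+1) := by ring
    have hb3 : |(1/((m:ℝ)+1)^2) * (∑ k ∈ Icc 1 m, (k:ℝ) * aa θ k)|
        ≤ 2*(m:ℝ)*B/((m:ℝ)+1)^2 := by
      rw [abs_mul, _root_.abs_of_nonneg (by positivity)]
      calc (1/((m:ℝ)+1)^2) * |∑ k ∈ Icc 1 m, (k:ℝ) * aa θ k|
          ≤ (1/((m:ℝ)+1)^2) * (2*(m:ℝ)*B) := by
            exact mul_le_mul_of_nonneg_left ht3 (by positivity)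
        _ = 2*(m:ℝ)*B/((m:ℝ)+1)^2 := by ring
    have e1 : 2*B/((m:ℝ)+1) ≤ 2*B/(m:ℝ) := by
      apply div_le_div_of_nonneg_left (by positivity) hmp (by linarith)
    have e3 : 2*(m:ℝ)*B/((m:ℝ)+1)^2 ≤ 2*B/(m:ℝ) := by
      rw [div_le_div_iff₀ (by positivity) hmp]
      nlinarith [hBpos.le]
    calc |gammaM m θ + θ/2| ≤ _ := habs
      _ ≤ 2*B/((m:ℝ)+1) + 2*B/((m:ℝ)+1) + 2*(m:ℝ)*B/((m:ℝ)+1)^2 :=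
          add_le_add (add_le_add ht1 hb2) hb3
      _ ≤ 2*B/(m:ℝ) + 2*B/(m:ℝ) + 2*B/(m:ℝ) := add_le_add (add_le_add e1 e1) e3
      _ = 6 * B / m := by ring
  constructor
  · exact ⟨6*B, by positivity, main⟩
  · refine ⟨12*B, by positivity, fun m hm => ?_⟩
    have h := main m hm
    have heq : θ + 2 * gammaM m θ = 2 * (gammaM m θ + θ/2) := by ring
    rw [heq, abs_mul]
    have hmp : (0:ℝ) < (m:ℝ) := by exact_mod_cast lt_of_lt_of_le zero_lt_one hm
    calc |(2:ℝ)| * |gammaM m θ + θ/2| = 2 * |gammaM m θ + θ/2| := by rw [_root_.abs_two]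
      _ ≤ 2 * (6*B/m) := by linarith
      _ = 12*B/m := by ring
end
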